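/- arXiv:1903.08793 — 9 statements merged into one kernel-verified Lean document; each statement's English description precedes it below -/
import Mathlib

section
/- A faithful G-extension C = ⊕_{g∈G} C_g of a fusion category D is a slightly trivial extension (every component C_g is similar to D) if and only if every component C_g contains an invertible simple object. -/
open scoped BigOperators
open Real

/-- A fusion ring: the Grothendieck-ring data of a fusion category, with basis `I`
(the isomorphism classes of simple objects), fusion multiplicities `N`, unit,
duality, and Frobenius–Perron dimensions `d`. -/
structure FusionRing (I : Type) [Fintype I] [DecidableEq I] where
  N : I → I → I → ℕ
  one : I
  dual : I → I
  d : I → ℝ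
  d_one : d one = 1
  one_le_d : ∀ i, 1 ≤ d i
  dual_dual : ∀ i, dual (dual i) = i
  d_dual : ∀ i, d (dual i) = d i
  d_mul : ∀ i j, d i * d j = ∑ k, (N i j k : ℝ) * d k
  N_one_left : ∀ i k, N one i k = if k = i then 1 else 0
  N_one_right : ∀ i k, N i one k = if k = i then 1 else 0
  N_unit : ∀ i j, N i j one = if j = dual i then 1 else 0
  assoc : ∀ i j k l, ∑ m, N i j m * N m k l = ∑ m, N j k m * N i m l

/-- A faithfully `G`-graded fusion ring: the Grothendieck data of a faithful
`G`-extension `C = ⊕_{g ∈ G} C_g` of the fusion category `D = C_e`. -/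
structure GradedFusionRing (G : Type) [Group G] [Fintype G] [DecidableEq G]
    (I : Type) [Fintype I] [DecidableEq I] extends FusionRing I where
  deg : I → G
  deg_one : deg one = 1
  deg_mul : ∀ i j k, N i j k ≠ 0 → deg k = deg i * deg j
  faithful : Function.Surjective deg

/-- The component `C_g` is *similar* to the trivial component `D = C_e`: it contains
an invertible simple object `δ` with `Irr(C_g) = {δ ⊗ X : X ∈ Irr(D)}`. -/
def SimilarComponent {G I : Type} [Group G] [Fintype G] [DecidableEq G]
    [Fintype I] [DecidableEq I] (R : GradedFusionRing G I) (g : G) : Prop :=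
  ∃ δ : I, R.deg δ = g ∧ R.d δ = 1 ∧
    ∃ φ : {i : I // R.deg i = 1} ≃ {i : I // R.deg i = g},
      ∀ X : {i : I // R.deg i = 1},
        R.N δ X.1 (φ X).1 = 1 ∧ ∀ k : I, R.N δ X.1 k ≠ 0 → k = (φ X).1


namespace FusionRing
variable {I : Type} [Fintype I] [DecidableEq I] (R : FusionRing I)

lemma d_pos (i : I) : 0 < R.d i := lt_of_lt_of_le one_pos (R.one_le_d i)

/-- If the weighted sum is at most one term, all other coefficients vanish. -/
lemma sum_sub (f : I → ℕ) (m : I)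
    (h : ∑ k, (f k : ℝ) * R.d k ≤ (f m : ℝ) * R.d m) :
    (∀ k, k ≠ m → f k = 0) ∧ (f m : ℝ) * R.d m = ∑ k, (f k : ℝ) * R.d k := by
  have hsplit : ∑ k, (f k : ℝ) * R.d k
      = (f m : ℝ) * R.d m + ∑ k ∈ Finset.univ.erase m, (f k : ℝ) * R.d k :=
    (Finset.add_sum_erase Finset.univ (fun k => (f k : ℝ) * R.d k) (Finset.mem_univ m)).symm
  have hnn : ∀ k ∈ Finset.univ.erase m, (0:ℝ) ≤ (f k : ℝ) * R.d k := fun k _ =>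
    mul_nonneg (Nat.cast_nonneg _) (le_of_lt (R.d_pos k))
  have hzero : ∑ k ∈ Finset.univ.erase m, (f k : ℝ) * R.d k = 0 := by
    have h2 : ∑ k ∈ Finset.univ.erase m, (f k : ℝ) * R.d k ≤ 0 := by linarith [hsplit, h]
    exact le_antisymm h2 (Finset.sum_nonneg hnn)
  have hterm := (Finset.sum_eq_zero_iff_of_nonneg hnn).mp hzero
  constructor
  · intro k hk
    have := hterm k (Finset.mem_erase.mpr ⟨hk, Finset.mem_univ k⟩)
    have hd := R.d_pos k
    have : (f k : ℝ) = 0 := by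
      rcases mul_eq_zero.mp this with h' | h'
      · exact h'
      · exact absurd h' (ne_of_gt hd)
    exact_mod_cast this
  · rw [hsplit, hzero, add_zero]

/-- Tensoring with an invertible simple: key structure lemma. -/
lemma similar_step {δ : I} (hδ : R.d δ = 1) (X : I) :
    ∃ m, R.N δ X m = 1 ∧ (∀ k, k ≠ m → R.N δ X k = 0) ∧
      R.N (R.dual δ) m X = 1 ∧ (∀ k, k ≠ X → R.N (R.dual δ) m k = 0) ∧
      R.d m = R.d X := by
  -- Step A : N (dual δ) δ m = if m = one then 1 else 0
  have hone : R.N (R.dual δ) δ R.one = 1 := by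
    rw [R.N_unit]; simp [R.dual_dual]
  have hA : ∀ m, R.N (R.dual δ) δ m = if m = R.one then 1 else 0 := by
    have hsum : ∑ k, (R.N (R.dual δ) δ k : ℝ) * R.d k = 1 := by
      rw [← R.d_mul, R.d_dual, hδ, one_mul]
    have hle : ∑ k, (R.N (R.dual δ) δ k : ℝ) * R.d k
        ≤ (R.N (R.dual δ) δ R.one : ℝ) * R.d R.one := by
      rw [hsum, hone, R.d_one]; norm_num
    have := (R.sum_sub (R.N (R.dual δ) δ) R.one hle).1
    intro m
    by_cases hm : m = R.one
    · simp [hm, hone]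
    · simp [hm, this m hm]
  -- Step B : ∑ m, N δ X m * N (dual δ) m X = 1
  have hB : ∑ m, R.N δ X m * R.N (R.dual δ) m X = 1 := by
    have := R.assoc (R.dual δ) δ X X
    rw [← this]
    have : ∀ m, R.N (R.dual δ) δ m * R.N m X X
        = if m = R.one then R.N R.one X X else 0 := by
      intro m; rw [hA m]; by_cases hm : m = R.one <;> simp [hm]
    rw [Finset.sum_congr rfl (fun m _ => this m), Finset.sum_ite_eq' Finset.univ R.one
      (fun _ => R.N R.one X X)]
    simp [R.N_one_left]
  -- obtain m₀ with both factors positive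
  obtain ⟨m₀, -, hm₀⟩ : ∃ m ∈ Finset.univ, R.N δ X m * R.N (R.dual δ) m X ≠ 0 := by
    by_contra h
    push_neg at h
    have : ∑ m, R.N δ X m * R.N (R.dual δ) m X = 0 :=
      Finset.sum_eq_zero (fun m hm => h m hm)
    omega
  have h1 : 1 ≤ R.N δ X m₀ := Nat.one_le_iff_ne_zero.mpr (fun h => hm₀ (by simp [h]))
  have h2 : 1 ≤ R.N (R.dual δ) m₀ X := Nat.one_le_iff_ne_zero.mpr (fun h => hm₀ (by simp [h]))
  -- dimension comparisons
  have hdX : R.d X = ∑ k, (R.N δ X k : ℝ) * R.d k := by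
    rw [← R.d_mul, hδ, one_mul]
  have hdm : R.d m₀ = ∑ k, (R.N (R.dual δ) m₀ k : ℝ) * R.d k := by
    rw [← R.d_mul, R.d_dual, hδ, one_mul]
  have hterm1 : (R.N δ X m₀ : ℝ) * R.d m₀ ≤ R.d X := by
    rw [hdX]
    exact Finset.single_le_sum (f := fun k => (R.N δ X k : ℝ) * R.d k)
      (fun k _ => mul_nonneg (Nat.cast_nonneg _) (le_of_lt (R.d_pos k))) (Finset.mem_univ m₀)
  have hterm2 : (R.N (R.dual δ) m₀ X : ℝ) * R.d X ≤ R.d m₀ := by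
    rw [hdm]
    exact Finset.single_le_sum (f := fun k => (R.N (R.dual δ) m₀ k : ℝ) * R.d k)
      (fun k _ => mul_nonneg (Nat.cast_nonneg _) (le_of_lt (R.d_pos k))) (Finset.mem_univ X)
  have hc1 : (1:ℝ) ≤ (R.N δ X m₀ : ℝ) := by exact_mod_cast h1
  have hc2 : (1:ℝ) ≤ (R.N (R.dual δ) m₀ X : ℝ) := by exact_mod_cast h2
  have hdm_le : R.d m₀ ≤ R.d X := by nlinarith [R.d_pos m₀, hterm1]
  have hdX_le : R.d X ≤ R.d m₀ := by nlinarith [R.d_pos X, hterm2]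
  have hdeq : R.d m₀ = R.d X := le_antisymm hdm_le hdX_le
  -- apply sum_sub on both sides
  have hs1 := R.sum_sub (R.N δ X) m₀ (by rw [← hdX]; nlinarith [R.d_pos m₀])
  have hs2 := R.sum_sub (R.N (R.dual δ) m₀) X (by rw [← hdm]; nlinarith [R.d_pos X])
  have hn1 : R.N δ X m₀ = 1 := by
    have := hs1.2
    rw [← hdX] at this
    have hd := R.d_pos m₀
    rw [hdeq] at this
    have h' : (R.N δ X m₀ : ℝ) * R.d X = 1 * R.d X := by rw [one_mul]; exact this
    have := mul_right_cancel₀ (ne_of_gt (R.d_pos X)) h'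
    exact_mod_cast this
  have hn2 : R.N (R.dual δ) m₀ X = 1 := by
    have := hs2.2
    rw [← hdm] at this
    rw [hdeq] at this
    have h' : (R.N (R.dual δ) m₀ X : ℝ) * R.d X = 1 * R.d X := by rw [one_mul]; linarith
    have := mul_right_cancel₀ (ne_of_gt (R.d_pos X)) h'
    exact_mod_cast this
  exact ⟨m₀, hn1, hs1.1, hn2, hs2.1, hdeq⟩

end FusionRing


/-- a faithful `G`-extension `C = ⊕_g C_g` of `D` is a slightly trivial
extension (every component is similar to `D`) iff every component contains an
invertible simple object. -/
theorem stmt3 {G I : Type} [Group G] [Fintype G] [DecidableEq G]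
    [Fintype I] [DecidableEq I] (R : GradedFusionRing G I) :
    (∀ g : G, SimilarComponent R g) ↔ (∀ g : G, ∃ δ : I, R.deg δ = g ∧ R.d δ = 1) := by
  constructor
  · intro h g
    obtain ⟨δ, h1, h2, -⟩ := h g
    exact ⟨δ, h1, h2⟩
  · intro h g
    obtain ⟨δ, hdeg, hd⟩ := h g
    refine ⟨δ, hdeg, hd, ?_⟩
    have hd' : R.d (R.dual δ) = 1 := by rw [R.d_dual]; exact hd
    -- the forward map and its spec
    let F : I → I := fun X => Classical.choose (R.toFusionRing.similar_step hd X)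
    have hF : ∀ X : I, R.N δ X (F X) = 1 ∧ (∀ k, k ≠ F X → R.N δ X k = 0) ∧
        R.N (R.dual δ) (F X) X = 1 ∧ (∀ k, k ≠ X → R.N (R.dual δ) (F X) k = 0) ∧
        R.d (F X) = R.d X :=
      fun X => Classical.choose_spec (R.toFusionRing.similar_step hd X)
    -- the backward map and its spec
    let F' : I → I := fun m => Classical.choose (R.toFusionRing.similar_step hd' m)
    have hF' : ∀ m : I, R.N (R.dual δ) m (F' m) = 1 ∧
        (∀ k, k ≠ F' m → R.N (R.dual δ) m k = 0) ∧
        R.N (R.dual (R.dual δ)) (F' m) m = 1 ∧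
        (∀ k, k ≠ m → R.N (R.dual (R.dual δ)) (F' m) k = 0) ∧
        R.d (F' m) = R.d m :=
      fun m => Classical.choose_spec (R.toFusionRing.similar_step hd' m)
    -- degree of the dual
    have hdual : R.deg (R.dual δ) = g⁻¹ := by
      have hne : R.N δ (R.dual δ) R.one ≠ 0 := by rw [R.N_unit]; simp
      have := R.deg_mul _ _ _ hne
      rw [R.deg_one, hdeg] at this
      exact (inv_eq_of_mul_eq_one_right this.symm).symm
    -- degree of F X and F' m
    have hdegF : ∀ X : I, R.deg X = 1 → R.deg (F X) = g := by
      intro X hX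
      have hne : R.N δ X (F X) ≠ 0 := by rw [(hF X).1]; exact one_ne_zero
      rw [R.deg_mul _ _ _ hne, hdeg, hX, mul_one]
    have hdegF' : ∀ m : I, R.deg m = g → R.deg (F' m) = 1 := by
      intro m hm
      have hne : R.N (R.dual δ) m (F' m) ≠ 0 := by rw [(hF' m).1]; exact one_ne_zero
      rw [R.deg_mul _ _ _ hne, hdual, hm, inv_mul_cancel]
    -- left and right inverse
    have hleft : ∀ X : I, F' (F X) = X := by
      intro X
      by_contra hne
      have h0 := (hF X).2.2.2.1 (F' (F X)) hne
      rw [(hF' (F X)).1] at h0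
      exact one_ne_zero h0
    have hright : ∀ m : I, F (F' m) = m := by
      intro m
      by_contra hne
      have h0 := (hF (F' m)).2.1 m (Ne.symm hne)
      have h1 := (hF' m).2.2.1
      rw [R.dual_dual] at h1
      rw [h1] at h0
      exact one_ne_zero h0
    refine ⟨⟨fun X => ⟨F X.1, hdegF X.1 X.2⟩, fun m => ⟨F' m.1, hdegF' m.1 m.2⟩,
      fun X => Subtype.ext (hleft X.1), fun m => Subtype.ext (hright m.1)⟩, ?_⟩
    intro X
    refine ⟨(hF X.1).1, ?_⟩
    intro k hk
    by_contra hne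
    exact hk ((hF X.1).2.1 k hne)
end

section
/- Let C = ⊕_{g∈G} C_g be a slightly trivial extension of a fusion category D, and suppose the largest pointed fusion subcategory D_pt of D is trivial (equivalently, the trivial object is the only invertible simple object of D). Then every component C_g contains exactly one invertible simple object, and every simple object of C can be written uniquely as δ⊗Y with δ an invertible simple object of C and Y ∈ Irr(D); hence C = C_pt • D is an exact factorization. -/
open scoped BigOperators
open Real

/-- if `C = ⊕_g C_g` is a slightly trivial extension of `D` and the
pointed part of `D` is trivial (the unit is the only invertible simple of degree
`e`), then every component contains exactly one invertible simple object, and every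
simple object of `C` is uniquely of the form `δ ⊗ Y` with `δ` invertible simple and
`Y ∈ Irr(D)`; hence `C = C_pt • D` is an exact factorization. -/
theorem stmt4 {G I : Type} [Group G] [Fintype G] [DecidableEq G]
    [Fintype I] [DecidableEq I] (R : GradedFusionRing G I)
    (hst : ∀ g : G, SimilarComponent R g)
    (hpt : ∀ i : I, R.deg i = 1 → R.d i = 1 → i = R.one) :
    (∀ g : G, ∃! δ : I, R.deg δ = g ∧ R.d δ = 1) ∧
    (∀ Z : I, ∃! p : I × I,
      R.d p.1 = 1 ∧ R.deg p.2 = 1 ∧ R.N p.1 p.2 Z ≠ 0) := by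

  -- Lemma A: a product of two invertible simples contains an invertible simple.
  have lemA : ∀ i j : I, R.d i = 1 → R.d j = 1 →
      ∃ k, R.N i j k ≠ 0 ∧ R.d k = 1 := by
    intro i j hi hj
    have hsum : (1 : ℝ) = ∑ k, (R.N i j k : ℝ) * R.d k := by
      rw [← R.d_mul, hi, hj]; ring
    have hex : ∃ k, R.N i j k ≠ 0 := by
      by_contra h
      push_neg at h
      simp only [h, Nat.cast_zero, zero_mul, Finset.sum_const_zero] at hsum
      norm_num at hsum
    obtain ⟨k, hk⟩ := hex
    have hnonneg : ∀ m ∈ Finset.univ, (0 : ℝ) ≤ (R.N i j m : ℝ) * R.d m := by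
      intro m _
      exact mul_nonneg (Nat.cast_nonneg _)
        (le_trans zero_le_one (R.one_le_d m))
    have hle : (R.N i j k : ℝ) * R.d k ≤ 1 := by
      rw [hsum]
      exact Finset.single_le_sum hnonneg (Finset.mem_univ k)
    have hN1 : (1 : ℝ) ≤ (R.N i j k : ℝ) := by
      exact_mod_cast Nat.one_le_iff_ne_zero.mpr hk
    have hdk : R.d k ≤ 1 := by nlinarith [R.one_le_d k]
    exact ⟨k, hk, le_antisymm hdk (R.one_le_d k)⟩
  -- uniqueness of the invertible simple in each degree
  have huniq : ∀ g : G, ∀ δ δ' : I, R.deg δ = g → R.d δ = 1 →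
      R.deg δ' = g → R.d δ' = 1 → δ' = δ := by
    intro g δ δ' hdg hd hdg' hd'
    have hdd : R.d (R.dual δ) = 1 := by rw [R.d_dual, hd]
    have hNone : R.N δ (R.dual δ) R.one = 1 := by rw [R.N_unit]; simp
    have hdegdual : R.deg (R.dual δ) = g⁻¹ := by
      have h := R.deg_mul δ (R.dual δ) R.one (by rw [hNone]; exact one_ne_zero)
      rw [R.deg_one, hdg] at h
      exact eq_inv_of_mul_eq_one_right h.symm
    obtain ⟨k, hk, hdk⟩ := lemA (R.dual δ) δ' hdd hd'
    have hdegk : R.deg k = 1 := by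
      rw [R.deg_mul _ _ _ hk, hdegdual, hdg']
      group
    have hko : k = R.one := hpt k hdegk hdk
    rw [hko] at hk
    by_cases h : δ' = R.dual (R.dual δ)
    · rw [R.dual_dual] at h; exact h
    · rw [R.N_unit, if_neg h] at hk; exact absurd rfl hk
  constructor
  · intro g
    obtain ⟨δ, hdeg, hd, -⟩ := hst g
    exact ⟨δ, ⟨hdeg, hd⟩, fun y hy => huniq g δ y hdeg hd hy.1 hy.2⟩
  · intro Z
    obtain ⟨δ, hdeg, hd, φ, hφ⟩ := hst (R.deg Z)
    set X : {i : I // R.deg i = 1} := φ.symm ⟨Z, rfl⟩ with hX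
    have hφX : (φ X).1 = Z := by rw [hX, Equiv.apply_symm_apply]
    have hNZ : R.N δ X.1 Z = 1 := by rw [← hφX]; exact (hφ X).1
    refine ⟨(δ, X.1), ⟨hd, X.2, by rw [hNZ]; exact one_ne_zero⟩, ?_⟩
    rintro ⟨a, b⟩ ⟨ha, hb, hN⟩
    have hdega : R.deg a = R.deg Z := by
      rw [R.deg_mul a b Z hN, hb, mul_one]
    have haδ : a = δ := huniq (R.deg Z) δ a hdeg hd hdega ha
    subst haδ
    have hbX : b = X.1 := by
      have h2 := (hφ ⟨b, hb⟩).2 Z hN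
      have : φ ⟨b, hb⟩ = φ X := Subtype.ext (by rw [← h2, hφX])
      have h3 : (⟨b, hb⟩ : {i : I // R.deg i = 1}) = X := φ.injective this
      exact congrArg Subtype.val h3
    rw [hbX]
end

section
/- Let C = ⊕_{g∈G} C_g be a faithful G-extension of a fusion category D containing a simple object X with 1 < FPdim(X) < 2. Then for every g ∈ G, either C_g contains an invertible simple object, or there exists a simple object Y ∈ C_g of minimal Frobenius-Perron dimension in C_g such that X ⊗ Y is simple. -/
open scoped BigOperators
open Real

/-- if a faithful `G`-extension `C = ⊕_g C_g` of `D` has a simple object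
`X ∈ Irr(D)` with `1 < FPdim X < 2`, then each component `C_g` either contains an
invertible simple object, or contains a simple object `Y` of minimal
Frobenius–Perron dimension in `C_g` such that `X ⊗ Y` is simple. -/
theorem stmt6 {G I : Type} [Group G] [Fintype G] [DecidableEq G]
    [Fintype I] [DecidableEq I] (R : GradedFusionRing G I)
    (X : I) (hXdeg : R.deg X = 1) (hX1 : 1 < R.d X) (hX2 : R.d X < 2) :
    ∀ g : G,
      (∃ δ : I, R.deg δ = g ∧ R.d δ = 1) ∨
      (∃ Y : I, R.deg Y = g ∧ (∀ Y' : I, R.deg Y' = g → R.d Y ≤ R.d Y') ∧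
        ∃ Z : I, ∀ m : I, R.N X Y m = if m = Z then 1 else 0) := by
  intro g
  right
  obtain ⟨Y, hYdeg, hYmin⟩ : ∃ Y, R.deg Y = g ∧ ∀ Y', R.deg Y' = g → R.d Y ≤ R.d Y' := by
    obtain ⟨y0, hy0⟩ := R.faithful g
    obtain ⟨Y, hYmem, hmin⟩ := Finset.exists_min_image
      (Finset.univ.filter (fun i => R.deg i = g)) R.d ⟨y0, by simp [hy0]⟩
    exact ⟨Y, by simpa using hYmem, fun Y' h => hmin Y' (by simp [h])⟩
  refine ⟨Y, hYdeg, hYmin, ?_⟩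
  have hdY : (1:ℝ) ≤ R.d Y := R.one_le_d Y
  have hdYpos : (0:ℝ) < R.d Y := lt_of_lt_of_le one_pos hdY
  have hsum : R.d X * R.d Y = ∑ k, (R.N X Y k : ℝ) * R.d k := R.d_mul X Y
  have hge : (∑ k, (R.N X Y k : ℝ)) * R.d Y ≤ R.d X * R.d Y := by
    rw [hsum, Finset.sum_mul]
    apply Finset.sum_le_sum
    intro k _
    by_cases h : R.N X Y k = 0
    · simp [h]
    · have hdeg : R.deg k = g := by rw [R.deg_mul X Y k h, hXdeg, hYdeg, one_mul]
      exact mul_le_mul_of_nonneg_left (hYmin k hdeg) (by positivity)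
  have hN2 : ((∑ k, R.N X Y k : ℕ) : ℝ) < 2 := by
    have h1 : (∑ k, (R.N X Y k : ℝ)) ≤ R.d X := le_of_mul_le_mul_right hge hdYpos
    push_cast
    exact lt_of_le_of_lt h1 hX2
  have hNle : (∑ k, R.N X Y k) ≤ 1 := by
    have := Nat.cast_lt (α := ℝ) (m := ∑ k, R.N X Y k) (n := 2) |>.1 (by exact_mod_cast hN2)
    omega
  have hNpos : 0 < ∑ k, R.N X Y k := by
    by_contra h
    have h0 : ∀ k, R.N X Y k = 0 := by
      intro k
      have := Nat.le_zero.mp (Nat.not_lt.mp h)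
      exact (Finset.sum_eq_zero_iff.mp this) k (Finset.mem_univ k)
    have : R.d X * R.d Y = 0 := by rw [hsum]; simp [h0]
    have hpos : (0:ℝ) < R.d X * R.d Y := mul_pos (lt_trans one_pos hX1) hdYpos
    linarith
  have hNeq : (∑ k, R.N X Y k) = 1 := le_antisymm hNle hNpos
  obtain ⟨Z, -, hZ⟩ := Finset.exists_ne_zero_of_sum_ne_zero (by rw [hNeq]; exact one_ne_zero)
  refine ⟨Z, fun m => ?_⟩
  have hZ1 : R.N X Y Z = 1 := by
    have hle : R.N X Y Z ≤ ∑ k, R.N X Y k :=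
      Finset.single_le_sum (fun k _ => Nat.zero_le _) (Finset.mem_univ Z)
    omega
  by_cases hm : m = Z
  · simp [hm, hZ1]
  · simp only [hm, if_false]
    have hsplit : R.N X Y Z + ∑ k ∈ Finset.univ.erase Z, R.N X Y k = ∑ k, R.N X Y k :=
      Finset.add_sum_erase _ _ (Finset.mem_univ Z)
    have hrest : ∑ k ∈ Finset.univ.erase Z, R.N X Y k = 0 := by omega
    exact Finset.sum_eq_zero_iff.mp hrest m (by simp [hm])
end

section
/- In the argument of the previous lemma: if X, Y are simple with 1 < FPdim(X) < 2 and Y of minimal FP-dimension in its graded component, write X⊗Y = ⊕_{i=1}^n N^i Y_i with Y_1 = Y and FPdim(Y_1) ≤ ... ≤ FPdim(Y_n). Then N^1 = 0, all N^i ∈ {0,1}, and exactly one N^i is nonzero, so X⊗Y is simple. -/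
open scoped BigOperators
open Real

/-- if `X, Y` are simple, `1 < FPdim X < 2`, `X` lies in the trivial
component and `Y` has minimal Frobenius–Perron dimension in its graded component,
then in the decomposition `X ⊗ Y = ⊕ N^i Y_i` one has `N^Y = 0` (i.e. `Y` itself
does not occur), every multiplicity is `0` or `1`, and exactly one simple occurs:
`X ⊗ Y` is simple. -/
theorem stmt7 {G I : Type} [Group G] [Fintype G] [DecidableEq G]
    [Fintype I] [DecidableEq I] (R : GradedFusionRing G I)
    (X Y : I) (hXdeg : R.deg X = 1) (hX1 : 1 < R.d X) (hX2 : R.d X < 2)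
    (hmin : ∀ k : I, R.deg k = R.deg Y → R.d Y ≤ R.d k) :
    R.N X Y Y = 0 ∧ (∀ k : I, R.N X Y k ≤ 1) ∧ (∃! k : I, R.N X Y k ≠ 0) := by
  have hdY : (1:ℝ) ≤ R.d Y := R.one_le_d Y
  have hdYpos : (0:ℝ) < R.d Y := lt_of_lt_of_le one_pos hdY
  set S : ℝ := ∑ k, (R.N X Y k : ℝ) * R.d k with hS
  have hSeq : R.d X * R.d Y = S := R.d_mul X Y
  have hSlt : S < 2 * R.d Y := by rw [← hSeq]; nlinarith
  have hSgt : R.d Y < S := by rw [← hSeq]; nlinarith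
  have hdk : ∀ k, R.N X Y k ≠ 0 → R.d Y ≤ R.d k := by
    intro k hk
    exact hmin k (by rw [R.deg_mul X Y k hk, hXdeg, one_mul])
  have hterm : ∀ k ∈ (Finset.univ : Finset I), 0 ≤ (R.N X Y k : ℝ) * R.d k := by
    intro k _
    exact mul_nonneg (Nat.cast_nonneg _) (le_trans zero_le_one (R.one_le_d k))
  have hle : ∀ k : I, R.N X Y k ≤ 1 := by
    intro k
    by_contra hk
    push_neg at hk
    have hk2 : (2:ℝ) ≤ (R.N X Y k : ℝ) := by exact_mod_cast hk
    have hne : R.N X Y k ≠ 0 := by omega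
    have h1 : (R.N X Y k : ℝ) * R.d k ≤ S :=
      Finset.single_le_sum hterm (Finset.mem_univ k)
    have h2 : 2 * R.d Y ≤ (R.N X Y k : ℝ) * R.d k := by
      have := hdk k hne
      nlinarith [le_trans zero_le_one (R.one_le_d k)]
    linarith
  have huniq : ∃! k : I, R.N X Y k ≠ 0 := by
    have hex : ∃ k : I, R.N X Y k ≠ 0 := by
      by_contra h
      push_neg at h
      have : S = 0 := by
        apply Finset.sum_eq_zero
        intro k _
        rw [h k]
        simp
      linarith
    obtain ⟨k0, hk0⟩ := hex
    refine ⟨k0, hk0, ?_⟩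
    intro k1 hk1
    by_contra hne
    have h1 : (R.N X Y k1 : ℝ) * R.d k1 + ∑ k ∈ Finset.univ.erase k1, (R.N X Y k : ℝ) * R.d k = S := by
      rw [hS]; exact Finset.add_sum_erase _ (fun k => (R.N X Y k : ℝ) * R.d k) (Finset.mem_univ k1)
    have h2 : (R.N X Y k0 : ℝ) * R.d k0 ≤ ∑ k ∈ Finset.univ.erase k1, (R.N X Y k : ℝ) * R.d k := by
      apply Finset.single_le_sum (fun k _ => hterm k (Finset.mem_univ k))
      exact Finset.mem_erase.2 ⟨fun h => hne h.symm, Finset.mem_univ k0⟩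
    have c0 : (1:ℝ) ≤ (R.N X Y k0 : ℝ) := by
      exact_mod_cast Nat.one_le_iff_ne_zero.2 hk0
    have c1 : (1:ℝ) ≤ (R.N X Y k1 : ℝ) := by
      exact_mod_cast Nat.one_le_iff_ne_zero.2 hk1
    have d0 := hdk k0 hk0
    have d1 := hdk k1 hk1
    nlinarith [le_trans zero_le_one (R.one_le_d k0), le_trans zero_le_one (R.one_le_d k1)]
  refine ⟨?_, hle, huniq⟩
  by_contra hY
  obtain ⟨k0, hk0, hun⟩ := huniq
  have hk0Y : k0 = Y := (hun Y hY).symm ▸ rfl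
  have hSY : S = (R.N X Y Y : ℝ) * R.d Y := by
    rw [hS]
    apply Finset.sum_eq_single
    · intro k _ hkY
      have : R.N X Y k = 0 := by
        by_contra hk
        exact hkY ((hun k hk).trans ((hun Y hY).symm))
      rw [this]; simp
    · intro h; exact absurd (Finset.mem_univ Y) h
  have : R.N X Y Y = 1 := by have := hle Y; omega
  rw [this] at hSY
  simp at hSY
  linarith
end

section
/- With c = cos(π/7), the real number 1 + 2c + 4c² + 8c³ is not equal to 1 + 4c² + (4c²−1)², i.e., √(1+2cos(π/7))² + (2cos(π/7))²·(1+2cos(π/7)) ≠ FPdim of the rank-3 fusion ring with dimensions (1, 2c, 4c²−1). -/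
open scoped BigOperators
open Real

/-- with `c = cos (π/7)`, the number `1 + 2c + 4c² + 8c³` (the would-be
dimension of a rank-2 component `{X, α ⊗ X}` with `X ⊗ X* = 1 ⊕ α`) differs from
`1 + 4c² + (4c² − 1)²` (the FP-dimension of the rank-3 fusion ring with dimensions
`(1, 2c, 4c² − 1)`). -/
theorem stmt9 :
    letI c : ℝ := Real.cos (Real.pi / 7)
    1 + 2 * c + 4 * c ^ 2 + 8 * c ^ 3 ≠ 1 + 4 * c ^ 2 + (4 * c ^ 2 - 1) ^ 2 := by
  intro h
  set c : ℝ := Real.cos (Real.pi / 7) with hc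
  have hpi := Real.pi_pos
  have hle : (1:ℝ)/2 < c := by
    have := Real.cos_lt_cos_of_nonneg_of_le_pi
      (by positivity : (0:ℝ) ≤ Real.pi / 7)
      (by linarith : Real.pi / 3 ≤ Real.pi)
      (by linarith : Real.pi / 7 < Real.pi / 3)
    rw [Real.cos_pi_div_three] at this
    linarith
  have hub : c ≤ 1 := Real.cos_le_one _
  nlinarith [sq_nonneg (c - 1), sq_nonneg (c - 1/2), sq_nonneg c]
end

section
/- Let D be a fusion category of rank 3 with Irr(D) = {1, α, β} and fusion rules α⊗α = 1⊕β, β⊗β = 1⊕α⊕β, α⊗β = β⊗α = α⊕β. Then every faithful G-extension C = ⊕_{g∈G} C_g of D is a slightly trivial extension of D, i.e., every component C_g contains an invertible simple object. -/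
open scoped BigOperators
open Real

namespace Stmt10Aux

variable {G I : Type} [Group G] [Fintype G] [DecidableEq G] [Fintype I] [DecidableEq I]

lemma cyc (R : GradedFusionRing G I) (i j k : I) :
    R.N i j (R.dual k) = R.N j k (R.dual i) := by
  have h := R.assoc i j k R.one
  have h1 : (∑ m, R.N i j m * R.N m k R.one) = R.N i j (R.dual k) := by
    have e : ∀ m : I, R.N i j m * R.N m k R.one
        = if m = R.dual k then R.N i j m else 0 := by
      intro m
      rw [R.N_unit]
      by_cases hm : m = R.dual k
      · have hkm : k = R.dual m := by rw [hm, R.dual_dual]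
        rw [if_pos hkm, mul_one, if_pos hm]
      · have hkm : k ≠ R.dual m := fun hk => hm (by rw [hk, R.dual_dual])
        rw [if_neg hkm, mul_zero, if_neg hm]
    rw [Finset.sum_congr rfl fun m _ => e m, Finset.sum_ite_eq' Finset.univ (R.dual k) (R.N i j)]
    simp
  have h2 : (∑ m, R.N j k m * R.N i m R.one) = R.N j k (R.dual i) := by
    have e : ∀ m : I, R.N j k m * R.N i m R.one
        = if m = R.dual i then R.N j k m else 0 := by
      intro m
      rw [R.N_unit]
      by_cases hm : m = R.dual i
      · rw [if_pos hm, if_pos hm, mul_one]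
      · rw [if_neg hm, if_neg hm, mul_zero]
    rw [Finset.sum_congr rfl fun m _ => e m, Finset.sum_ite_eq' Finset.univ (R.dual i) (R.N j k)]
    simp
  rw [← h1, ← h2, h]

lemma frob1 (R : GradedFusionRing G I) (a X : I) (ha : R.dual a = a) :
    R.N a X X = R.N X (R.dual X) a := by
  have h := cyc R a X (R.dual X)
  rw [R.dual_dual] at h
  rw [h, ha]

lemma frob2 (R : GradedFusionRing G I) (X j k : I) :
    R.N X j k = R.N (R.dual k) X (R.dual j) := by
  have h1 := cyc R X j (R.dual k)
  rw [R.dual_dual] at h1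
  have h2 := cyc R j (R.dual k) X
  exact h1.trans h2

lemma deg_dual (R : GradedFusionRing G I) (i : I) :
    R.deg (R.dual i) = (R.deg i)⁻¹ := by
  have h : R.N i (R.dual i) R.one ≠ 0 := by
    rw [R.N_unit]; simp
  have h2 := R.deg_mul i (R.dual i) R.one h
  rw [R.deg_one] at h2
  exact eq_inv_of_mul_eq_one_right h2.symm

lemma d_pos (R : GradedFusionRing G I) (i : I) : 0 < R.d i :=
  lt_of_lt_of_le one_pos (R.one_le_d i)

lemma dmul_ite (R : GradedFusionRing G I) (i j : I) :
    R.d i * R.d j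
      = ∑ k, if R.deg k = R.deg i * R.deg j then (R.N i j k : ℝ) * R.d k else 0 := by
  rw [R.d_mul]
  refine Finset.sum_congr rfl fun k _ => ?_
  by_cases h : R.deg k = R.deg i * R.deg j
  · rw [if_pos h]
  · rw [if_neg h]
    have hz : R.N i j k = 0 := by
      by_contra hn; exact h (R.deg_mul i j k hn)
    rw [hz]; simp

lemma sum_deg_one (R : GradedFusionRing G I) (α β : I)
    (hα : R.deg α = 1) (hβ : R.deg β = 1)
    (hne1 : α ≠ R.one) (hne2 : β ≠ R.one) (hne3 : α ≠ β)
    (hrank : ∀ i : I, R.deg i = 1 → i = R.one ∨ i = α ∨ i = β) (f : I → ℝ) :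
    (∑ k, if R.deg k = 1 then f k else 0) = f R.one + f α + f β := by
  have hmem1 : R.one ∉ ({α, β} : Finset I) := by
    simp [Ne.symm hne1, Ne.symm hne2]
  have hmem2 : α ∉ ({β} : Finset I) := by simp [hne3]
  rw [← Finset.sum_subset (Finset.subset_univ ({R.one, α, β} : Finset I))
    (fun k _ hk => by
      rw [if_neg]
      intro hdeg
      rcases hrank k hdeg with h | h | h <;> subst h <;> simp at hk)]
  rw [Finset.sum_insert hmem1, Finset.sum_insert hmem2, Finset.sum_singleton,
    if_pos R.deg_one, if_pos hα, if_pos hβ, add_assoc]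

lemma fp_component (R : GradedFusionRing G I) (g : G) (X : I) (hX : R.deg X = g) :
    (∑ k, if R.deg k = g then R.d k * R.d k else 0)
      = ∑ k, if R.deg k = 1 then R.d k * R.d k else 0 := by
  have dXpos : 0 < R.d X := d_pos R X
  have key : ∀ k : I, (∑ j, (if R.deg j = 1 then R.d j else 0) * (R.N X j k : ℝ))
      = if R.deg k = g then R.d X * R.d k else 0 := by
    intro k
    by_cases hk : R.deg k = g
    · rw [if_pos hk]
      have drop : ∀ j : I, (if R.deg j = 1 then R.d j else 0) * (R.N X j k : ℝ)
          = R.d j * (R.N X j k : ℝ) := by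
        intro j
        by_cases hj : R.deg j = 1
        · rw [if_pos hj]
        · rw [if_neg hj]
          have hz : R.N X j k = 0 := by
            by_contra hn
            have hdk := R.deg_mul X j k hn
            apply hj
            rw [hk, hX] at hdk
            exact mul_eq_left.mp hdk.symm
          rw [hz]; simp
      rw [Finset.sum_congr rfl fun j _ => drop j]
      have hinv : Function.Involutive R.dual := R.dual_dual
      calc (∑ j, R.d j * (R.N X j k : ℝ))
          = ∑ j, R.d j * (R.N (R.dual k) X (R.dual j) : ℝ) := by
            refine Finset.sum_congr rfl fun j _ => ?_
            rw [← frob2]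
        _ = ∑ j, R.d j * (R.N (R.dual k) X j : ℝ) := by
            refine Fintype.sum_equiv (Function.Involutive.toPerm _ hinv) _ _ fun j => ?_
            simp only [Function.Involutive.coe_toPerm]
            rw [R.d_dual]
        _ = ∑ j, (R.N (R.dual k) X j : ℝ) * R.d j := by
            refine Finset.sum_congr rfl fun j _ => mul_comm _ _
        _ = R.d (R.dual k) * R.d X := (R.d_mul _ _).symm
        _ = R.d X * R.d k := by rw [R.d_dual, mul_comm]
    · rw [if_neg hk]
      apply Finset.sum_eq_zero
      intro j _
      by_cases hj : R.deg j = 1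
      · rw [if_pos hj]
        have hz : R.N X j k = 0 := by
          by_contra hn
          exact hk (by rw [R.deg_mul X j k hn, hj, hX, mul_one])
        rw [hz]; simp
      · rw [if_neg hj, zero_mul]
  have main : R.d X * (∑ k, if R.deg k = 1 then R.d k * R.d k else 0)
      = R.d X * (∑ k, if R.deg k = g then R.d k * R.d k else 0) := by
    calc R.d X * (∑ j, if R.deg j = 1 then R.d j * R.d j else 0)
        = ∑ j, (if R.deg j = 1 then R.d j else 0) * (R.d X * R.d j) := by
          rw [Finset.mul_sum]
          refine Finset.sum_congr rfl fun j _ => ?_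
          by_cases hj : R.deg j = 1 <;> simp [hj] <;> ring
      _ = ∑ j, (if R.deg j = 1 then R.d j else 0) * (∑ k, (R.N X j k : ℝ) * R.d k) := by
          refine Finset.sum_congr rfl fun j _ => by rw [← R.d_mul]
      _ = ∑ j, ∑ k, ((if R.deg j = 1 then R.d j else 0) * (R.N X j k : ℝ)) * R.d k := by
          refine Finset.sum_congr rfl fun j _ => ?_
          rw [Finset.mul_sum]
          refine Finset.sum_congr rfl fun k _ => by ring
      _ = ∑ k, ∑ j, ((if R.deg j = 1 then R.d j else 0) * (R.N X j k : ℝ)) * R.d k :=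
          Finset.sum_comm
      _ = ∑ k, (∑ j, (if R.deg j = 1 then R.d j else 0) * (R.N X j k : ℝ)) * R.d k := by
          refine Finset.sum_congr rfl fun k _ => (Finset.sum_mul _ _ _).symm
      _ = ∑ k, (if R.deg k = g then R.d X * R.d k else 0) * R.d k := by
          refine Finset.sum_congr rfl fun k _ => by rw [key k]
      _ = R.d X * (∑ k, if R.deg k = g then R.d k * R.d k else 0) := by
          rw [Finset.mul_sum]
          refine Finset.sum_congr rfl fun k _ => ?_
          by_cases hk : R.deg k = g <;> simp [hk] <;> ring
  exact (mul_left_cancel₀ (ne_of_gt dXpos) main).symm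

end Stmt10Aux

set_option maxHeartbeats 2000000 in
lemma keyArith (x y : ℝ) (hy' : y = x * x - 1)
    (hxlo : (180193 : ℝ) / 100000 < x) (hxhi : x < (180194 : ℝ) / 100000) :
    ∀ a b c : ℕ, 1 ≤ a → a ≤ 9 → b ≤ 5 → c ≤ 4 →
      (a : ℝ) + (b : ℝ) * x + (c : ℝ) * y = 3 + x + 2 * y → a = 3 ∧ b = 1 ∧ c = 2 := by
  have hx2lo : (3.2469 : ℝ) < x * x := by
    nlinarith [hxlo, sq_nonneg (x - 180193 / 100000)]
  have hx2hi : x * x < (3.2470 : ℝ) := by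
    have h1 : x * x ≤ x * (180194 / 100000) :=
      mul_le_mul_of_nonneg_left (le_of_lt hxhi) (by linarith)
    have h2 : x * (180194 / 100000) ≤ (180194 / 100000) * (180194 / 100000) :=
      mul_le_mul_of_nonneg_right (le_of_lt hxhi) (by norm_num)
    linarith
  intro a b c h1 h9 h5 h4 heq'
  interval_cases a <;> interval_cases b <;> interval_cases c <;>
    first
      | exact ⟨rfl, rfl, rfl⟩
      | (exfalso; push_cast at heq'; linarith only [heq', hy', hxlo, hxhi, hx2lo, hx2hi])

set_option maxHeartbeats 1000000 in
/-- if `D` is the rank-3 fusion category with `Irr D = {1, α, β}` and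
fusion rules `α² = 1 ⊕ β`, `β² = 1 ⊕ α ⊕ β`, `αβ = βα = α ⊕ β`, then every faithful
`G`-extension `C = ⊕_g C_g` of `D` is slightly trivial: every component contains an
invertible simple object. -/
theorem stmt10 {G I : Type} [Group G] [Fintype G] [DecidableEq G]
    [Fintype I] [DecidableEq I] (R : GradedFusionRing G I)
    (α β : I) (hα : R.deg α = 1) (hβ : R.deg β = 1)
    (hne1 : α ≠ R.one) (hne2 : β ≠ R.one) (hne3 : α ≠ β)
    (hrank : ∀ i : I, R.deg i = 1 → i = R.one ∨ i = α ∨ i = β)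
    (hαα : ∀ k : I, R.N α α k = (if k = R.one then 1 else 0) + (if k = β then 1 else 0))
    (hββ : ∀ k : I, R.N β β k =
      (if k = R.one then 1 else 0) + (if k = α then 1 else 0) + (if k = β then 1 else 0))
    (hαβ : ∀ k : I, R.N α β k = (if k = α then 1 else 0) + (if k = β then 1 else 0))
    (hβα : ∀ k : I, R.N β α k = (if k = α then 1 else 0) + (if k = β then 1 else 0)) :
    ∀ g : G, ∃ δ : I, R.deg δ = g ∧ R.d δ = 1 := by
  classical
  intro g
  by_contra hcon
  push_neg at hcon
  set x := R.d α with hxdef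
  set y := R.d β with hydef
  have hx1 : 1 ≤ x := R.one_le_d α
  have hy1 : 1 ≤ y := R.one_le_d β
  have sumif : ∀ (c : I) (f : I → ℝ), (∑ k, if k = c then f k else 0) = f c := by
    intro c f
    rw [Finset.sum_ite_eq' Finset.univ c f]
    simp
  -- self-duality of α
  have hNαα1 : R.N α α R.one = 1 := by
    rw [hαα, if_pos rfl, if_neg (Ne.symm hne2)]
  have hdα : R.dual α = α := by
    have h := R.N_unit α α
    rw [hNαα1] at h
    by_cases hc : α = R.dual α
    · exact hc.symm
    · rw [if_neg hc] at h
      exact absurd h one_ne_zero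
  -- dimension equations
  have hx2 : x * x = 1 + y := by
    have h := R.d_mul α α
    have h2 : ∑ k, (R.N α α k : ℝ) * R.d k
        = ∑ k, ((if k = R.one then R.d k else 0) + (if k = β then R.d k else 0)) := by
      refine Finset.sum_congr rfl fun k _ => ?_
      rw [hαα k]; push_cast; split_ifs <;> ring
    rw [h2, Finset.sum_add_distrib, sumif, sumif, R.d_one] at h
    exact h
  have hy2 : y * y = 1 + x + y := by
    have h := R.d_mul β β
    have h2 : ∑ k, (R.N β β k : ℝ) * R.d k
        = ∑ k, ((if k = R.one then R.d k else 0) + (if k = α then R.d k else 0)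
            + (if k = β then R.d k else 0)) := by
      refine Finset.sum_congr rfl fun k _ => ?_
      rw [hββ k]; push_cast; split_ifs <;> ring
    rw [h2, Finset.sum_add_distrib, Finset.sum_add_distrib, sumif, sumif, sumif, R.d_one] at h
    exact h
  have hxy : x * y = x + y := by
    have h := R.d_mul α β
    have h2 : ∑ k, (R.N α β k : ℝ) * R.d k
        = ∑ k, ((if k = α then R.d k else 0) + (if k = β then R.d k else 0)) := by
      refine Finset.sum_congr rfl fun k _ => ?_
      rw [hαβ k]; push_cast; split_ifs <;> ring
    rw [h2, Finset.sum_add_distrib, sumif, sumif] at h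
    exact h
  have hcube : x * (x * x) = x * x + 2 * x - 1 := by
    linear_combination x * hx2 + hxy - hx2
  -- numerical bounds
  have hxlo : (180193 : ℝ) / 100000 < x := by
    by_contra hcl
    push_neg at hcl
    nlinarith [hcube, hx1, mul_nonneg (sub_nonneg.mpr hcl) (sub_nonneg.mpr hx1),
      mul_nonneg (mul_nonneg (sub_nonneg.mpr hcl) (sub_nonneg.mpr hx1)) (sub_nonneg.mpr hx1),
      sq_nonneg (x - 1), sq_nonneg x]
  have hxhi : x < (180194 : ℝ) / 100000 := by
    by_contra hcl
    push_neg at hcl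
    nlinarith [hcube, mul_nonneg (sub_nonneg.mpr hcl) (sub_nonneg.mpr hcl),
      mul_nonneg (mul_nonneg (sub_nonneg.mpr hcl) (sub_nonneg.mpr hcl)) (sub_nonneg.mpr hcl),
      sq_nonneg (x - 2)]
  have hy' : y = x * x - 1 := by linarith
  have hx2lo : (3.2469 : ℝ) < x * x := by
    nlinarith [hxlo, sq_nonneg (x - 180193 / 100000)]
  have hx2hi : x * x < (3.2470 : ℝ) := by
    have h1 : x * x ≤ x * (180194 / 100000) :=
      mul_le_mul_of_nonneg_left (le_of_lt hxhi) (by linarith)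
    have h2 : x * (180194 / 100000) ≤ (180194 / 100000) * (180194 / 100000) :=
      mul_le_mul_of_nonneg_right (le_of_lt hxhi) (by norm_num)
    linarith
  have hylo : (2.2469 : ℝ) < y := by linarith
  have hyhi : y < (2.2470 : ℝ) := by linarith
  -- the component of degree g
  obtain ⟨X₀, hX₀⟩ := R.faithful g
  set Sg : Finset I := Finset.univ.filter (fun k => R.deg k = g) with hSg
  have hX₀mem : X₀ ∈ Sg := by simp [hSg, hX₀]
  set m : I → ℕ := fun X => R.N X (R.dual X) α with hm
  set n : I → ℕ := fun X => R.N X (R.dual X) β with hn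
  have hdecomp : ∀ X ∈ Sg, R.d X * R.d X = 1 + (m X : ℝ) * x + (n X : ℝ) * y := by
    intro X hX
    have hXg : R.deg X = g := by simpa [hSg] using hX
    have h := Stmt10Aux.dmul_ite R X (R.dual X)
    rw [Stmt10Aux.deg_dual, hXg, mul_inv_cancel,
      Stmt10Aux.sum_deg_one R α β hα hβ hne1 hne2 hne3 hrank
        (fun k => (R.N X (R.dual X) k : ℝ) * R.d k), R.d_dual] at h
    have hone : R.N X (R.dual X) R.one = 1 := by rw [R.N_unit]; simp
    rw [hone, R.d_one] at h
    push_cast at h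
    linarith
  have hFPg : ∑ X ∈ Sg, R.d X * R.d X = 3 + x + 2 * y := by
    calc ∑ X ∈ Sg, R.d X * R.d X
        = ∑ k, if R.deg k = g then R.d k * R.d k else 0 := by
          rw [hSg]; exact Finset.sum_filter _ _
      _ = ∑ k, if R.deg k = 1 then R.d k * R.d k else 0 :=
          Stmt10Aux.fp_component R g X₀ hX₀
      _ = R.d R.one * R.d R.one + x * x + y * y :=
          Stmt10Aux.sum_deg_one R α β hα hβ hne1 hne2 hne3 hrank _
      _ = 3 + x + 2 * y := by rw [R.d_one]; linarith
  have heq : ((Sg.card : ℝ)) + ((∑ X ∈ Sg, m X : ℕ) : ℝ) * x + ((∑ X ∈ Sg, n X : ℕ) : ℝ) * y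
      = 3 + x + 2 * y := by
    have h1 : ∑ X ∈ Sg, (1 + (m X : ℝ) * x + (n X : ℝ) * y) = 3 + x + 2 * y := by
      rw [← Finset.sum_congr rfl hdecomp]
      exact hFPg
    rw [Finset.sum_add_distrib, Finset.sum_add_distrib, Finset.sum_const,
      ← Finset.sum_mul, ← Finset.sum_mul] at h1
    push_cast at h1 ⊢
    simpa [nsmul_eq_mul] using h1
  set r : ℕ := Sg.card with hr
  set Mv : ℕ := ∑ X ∈ Sg, m X with hMv
  set Nv : ℕ := ∑ X ∈ Sg, n X with hNv
  have hmn1 : ∀ X ∈ Sg, 1 ≤ m X + n X := by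
    intro X hX
    by_contra hle
    push_neg at hle
    have hm0 : m X = 0 := by omega
    have hn0 : n X = 0 := by omega
    have hd := hdecomp X hX
    rw [hm0, hn0] at hd
    push_cast at hd
    have hfac : (R.d X - 1) * (R.d X + 1) = 0 := by linear_combination hd
    have hXg : R.deg X = g := by simpa [hSg] using hX
    rcases mul_eq_zero.mp hfac with h | h
    · exact hcon X hXg (by linarith)
    · linarith [R.one_le_d X]
  have hr1 : 1 ≤ r := Finset.card_pos.mpr ⟨X₀, hX₀mem⟩
  have hMx : (0 : ℝ) ≤ (Mv : ℝ) * x := mul_nonneg (Nat.cast_nonneg _) (by linarith)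
  have hNy : (0 : ℝ) ≤ (Nv : ℝ) * y := mul_nonneg (Nat.cast_nonneg _) (by linarith)
  have hrR : (1 : ℝ) ≤ (r : ℝ) := by exact_mod_cast hr1
  have hr9 : r ≤ 9 := by
    have : (r : ℝ) < 10 := by linarith [heq, hMx, hNy, hxhi, hyhi]
    exact_mod_cast Nat.lt_succ_iff.mp (by exact_mod_cast this)
  have hM5 : Mv ≤ 5 := by
    by_contra h
    push_neg at h
    have h6 : (6 : ℝ) ≤ (Mv : ℝ) := by exact_mod_cast h
    have h6x : 6 * x ≤ (Mv : ℝ) * x :=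
      mul_le_mul_of_nonneg_right h6 (by linarith)
    linarith [heq, hrR, hNy, hxlo, hxhi, hyhi]
  have hN4 : Nv ≤ 4 := by
    by_contra h
    push_neg at h
    have h5 : (5 : ℝ) ≤ (Nv : ℝ) := by exact_mod_cast h
    have h5y : 5 * y ≤ (Nv : ℝ) * y :=
      mul_le_mul_of_nonneg_right h5 (by linarith)
    linarith [heq, hrR, hMx, hylo, hxhi, hyhi]
  obtain ⟨hr3, hM1, hN2⟩ := keyArith x y hy' hxlo hxhi r Mv Nv hr1 hr9 hM5 hN4 heq
  -- every X in Sg has m X + n X = 1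
  have hmn_eq : ∀ X ∈ Sg, m X + n X = 1 := by
    by_contra hc
    push_neg at hc
    obtain ⟨X, hXs, hXne⟩ := hc
    have hlt : ∑ _X ∈ Sg, 1 < ∑ X ∈ Sg, (m X + n X) :=
      Finset.sum_lt_sum hmn1 ⟨X, hXs, by have := hmn1 X hXs; omega⟩
    rw [Finset.sum_add_distrib, ← hMv, ← hNv, Finset.sum_const, smul_eq_mul, mul_one, ← hr] at hlt
    omega
  -- find the unique X₁ with m X₁ = 1
  have hex : ∃ X₁ ∈ Sg, m X₁ = 1 := by
    by_contra hc
    push_neg at hc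
    have hz : Mv = 0 := by
      rw [hMv]
      exact Finset.sum_eq_zero fun X hX => by
        have := hmn_eq X hX; have := hc X hX; omega
    omega
  obtain ⟨X₁, hX₁s, hmX₁⟩ := hex
  have hnX₁ : n X₁ = 0 := by have := hmn_eq X₁ hX₁s; omega
  have hrest : ∀ Y ∈ Sg, Y ≠ X₁ → m Y = 0 := by
    intro Y hYs hYne
    have hsum : m X₁ + ∑ Z ∈ Sg.erase X₁, m Z = Mv := by
      rw [hMv]; exact Finset.add_sum_erase Sg m hX₁s
    have hz : ∑ Z ∈ Sg.erase X₁, m Z = 0 := by omega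
    exact Finset.sum_eq_zero_iff.mp hz Y (Finset.mem_erase.mpr ⟨hYne, hYs⟩)
  have hdY : ∀ Y ∈ Sg, Y ≠ X₁ → R.d Y = x := by
    intro Y hYs hYne
    have hm0 := hrest Y hYs hYne
    have hn1 : n Y = 1 := by have := hmn_eq Y hYs; omega
    have hd := hdecomp Y hYs
    rw [hm0, hn1] at hd
    push_cast at hd
    have hfac : (R.d Y - x) * (R.d Y + x) = 0 := by linear_combination hd - hx2
    rcases mul_eq_zero.mp hfac with h | h
    · linarith
    · linarith [R.one_le_d Y]
  have hd1sq : R.d X₁ * R.d X₁ = 1 + x := by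
    have hd := hdecomp X₁ hX₁s
    rw [hmX₁, hnX₁] at hd
    push_cast at hd
    linarith
  have hd1pos : 1 ≤ R.d X₁ := R.one_le_d X₁
  -- the fusion α ⊗ X₁
  have hX₁g : R.deg X₁ = g := by simpa [hSg] using hX₁s
  have hfin := Stmt10Aux.dmul_ite R α X₁
  rw [hα, one_mul, hX₁g, ← Finset.sum_filter, ← hSg,
    ← Finset.add_sum_erase Sg _ hX₁s] at hfin
  have hNαX₁ : R.N α X₁ X₁ = 1 := by
    rw [Stmt10Aux.frob1 R α X₁ hdα]; exact hmX₁
  have hrest_sum : ∑ k ∈ Sg.erase X₁, (R.N α X₁ k : ℝ) * R.d k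
      = ((∑ k ∈ Sg.erase X₁, R.N α X₁ k : ℕ) : ℝ) * x := by
    calc ∑ k ∈ Sg.erase X₁, (R.N α X₁ k : ℝ) * R.d k
        = ∑ k ∈ Sg.erase X₁, (R.N α X₁ k : ℝ) * x := by
          refine Finset.sum_congr rfl fun k hk => ?_
          obtain ⟨hkne, hks⟩ := Finset.mem_erase.mp hk
          rw [hdY k hks hkne]
      _ = ((∑ k ∈ Sg.erase X₁, R.N α X₁ k : ℕ) : ℝ) * x := by
          rw [← Finset.sum_mul]; norm_cast
  rw [hNαX₁, hrest_sum] at hfin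
  set Kn : ℕ := ∑ k ∈ Sg.erase X₁, R.N α X₁ k with hKn
  push_cast at hfin
  -- hfin : x * R.d X₁ = R.d X₁ + Kn * x
  have hd1nn : (0 : ℝ) ≤ R.d X₁ := by linarith
  rcases Nat.eq_zero_or_pos Kn with hK0 | hK1
  · rw [hK0] at hfin
    push_cast at hfin
    have hdd : (180193 : ℝ) / 100000 * R.d X₁ ≤ x * R.d X₁ :=
      mul_le_mul_of_nonneg_right (le_of_lt hxlo) hd1nn
    linarith [hfin, hd1pos, hdd]
  · have hKge : (1 : ℝ) ≤ (Kn : ℝ) := by exact_mod_cast hK1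
    have hKx : x ≤ (Kn : ℝ) * x := by
      have := mul_le_mul_of_nonneg_right hKge (by linarith : (0:ℝ) ≤ x)
      linarith
    have hge : x ≤ (x - 1) * R.d X₁ := by
      have hring : (x - 1) * R.d X₁ = x * R.d X₁ - R.d X₁ := by ring
      linarith [hfin, hKx]
    have hgenn : (0 : ℝ) ≤ (x - 1) * R.d X₁ := by linarith
    have hsq : x * x ≤ ((x - 1) * R.d X₁) * ((x - 1) * R.d X₁) :=
      mul_le_mul hge hge (by linarith) hgenn
    have hexp : ((x - 1) * R.d X₁) * ((x - 1) * R.d X₁)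
        = (x - 1) ^ 2 * (R.d X₁ * R.d X₁) := by ring
    have hid : (x - 1) ^ 2 * (1 + x) = x := by linear_combination hcube
    rw [hexp, hd1sq, hid] at hsq
    linarith [hx2lo, hxhi]
end

section
/- Every faithful G-extension of the rank-3 fusion category D with fusion rules α²=1+β, β²=1+α+β, αβ=α+β admits an exact factorization C = C_pt • D: every simple object of C is uniquely of the form δ⊗Y with δ invertible simple and Y ∈ Irr(D). -/
open scoped BigOperators
open Real

namespace FusionRing
variable {I : Type} [Fintype I] [DecidableEq I] (R : FusionRing I)

lemma cyclic (i j k : I) : R.N i j k = R.N j (R.dual k) (R.dual i) := by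
  have h := R.assoc i j (R.dual k) R.one
  have h1 : ∀ m : I, R.N m (R.dual k) R.one = if m = k then 1 else 0 := by
    intro m
    rw [R.N_unit]
    by_cases hm : m = k
    · simp [hm, R.dual_dual]
    · have : R.dual k ≠ R.dual m := by
        intro he
        apply hm
        have := congrArg R.dual he
        rw [R.dual_dual, R.dual_dual] at this
        exact this.symm
      simp [hm, this]
  have h2 : ∀ m : I, R.N i m R.one = if m = R.dual i then 1 else 0 := by
    intro m; rw [R.N_unit]
  simp only [h1, h2, mul_ite, mul_one, mul_zero] at h
  rw [Finset.sum_ite_eq' Finset.univ k (fun m => R.N i j m),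
      Finset.sum_ite_eq' Finset.univ (R.dual i) (fun m => R.N j (R.dual k) m)] at h
  simpa using h

lemma left_eigen (k l : I) : ∑ i, R.d i * (R.N i k l : ℝ) = R.d k * R.d l := by
  have h1 : ∀ i : I, R.N i k l = R.N k (R.dual l) (R.dual i) := fun i => R.cyclic i k l
  have e : I ≃ I := ⟨R.dual, R.dual, R.dual_dual, R.dual_dual⟩
  calc ∑ i, R.d i * (R.N i k l : ℝ)
      = ∑ i, R.d i * (R.N k (R.dual l) (R.dual i) : ℝ) := by
        apply Finset.sum_congr rfl; intro i _; rw [h1 i]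
    _ = ∑ i, R.d (R.dual i) * (R.N k (R.dual l) (R.dual (R.dual i)) : ℝ) := by
        exact (Fintype.sum_equiv ⟨R.dual, R.dual, R.dual_dual, R.dual_dual⟩ _ _
          (fun i => rfl)).symm
    _ = ∑ i, (R.N k (R.dual l) i : ℝ) * R.d i := by
        apply Finset.sum_congr rfl; intro i _
        rw [R.dual_dual, R.d_dual, mul_comm]
    _ = R.d k * R.d (R.dual l) := (R.d_mul k (R.dual l)).symm
    _ = R.d k * R.d l := by rw [R.d_dual]

lemma mid_eigen (X l : I) : ∑ i, (R.N X i l : ℝ) * R.d i = R.d X * R.d l := by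
  calc ∑ i, (R.N X i l : ℝ) * R.d i
      = ∑ i, R.d i * (R.N i (R.dual l) (R.dual X) : ℝ) := by
        apply Finset.sum_congr rfl; intro i _
        rw [mul_comm]
        rw [R.cyclic X i l]
    _ = R.d (R.dual l) * R.d (R.dual X) := R.left_eigen _ _
    _ = R.d X * R.d l := by rw [R.d_dual, R.d_dual, mul_comm]

end FusionRing

namespace FusionRing
variable {I : Type} [Fintype I] [DecidableEq I] (R : FusionRing I)

/-- If `δ` has FP-dimension 1, then `δ* ⊗ δ = 1`. -/
lemma unit_absorb {δ : I} (h : R.d δ = 1) (m : I) :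
    R.N (R.dual δ) δ m = if m = R.one then 1 else 0 := by
  have hone : R.N (R.dual δ) δ R.one = 1 := by
    rw [R.N_unit]; simp [R.dual_dual]
  have hsum : ∑ k, (R.N (R.dual δ) δ k : ℝ) * R.d k = 1 := by
    rw [← R.d_mul, R.d_dual, h, mul_one]
  by_cases hm : m = R.one
  · simp [hm, hone]
  · simp only [hm, if_false]
    -- split off the `one` term
    have hsplit : (∑ k ∈ Finset.univ.erase R.one, (R.N (R.dual δ) δ k : ℝ) * R.d k)
        + (R.N (R.dual δ) δ R.one : ℝ) * R.d R.one = 1 := by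
      rw [Finset.sum_erase_add]
      · exact hsum
      · exact Finset.mem_univ _
    rw [hone, R.d_one] at hsplit
    push_cast at hsplit
    have hzero : ∑ k ∈ Finset.univ.erase R.one, (R.N (R.dual δ) δ k : ℝ) * R.d k = 0 := by
      linarith
    have hterm : (R.N (R.dual δ) δ m : ℝ) * R.d m = 0 := by
      have hnn : ∀ k ∈ Finset.univ.erase R.one, 0 ≤ (R.N (R.dual δ) δ k : ℝ) * R.d k :=
        fun k _ => mul_nonneg (Nat.cast_nonneg _) (le_of_lt (R.d_pos k))
      have := (Finset.sum_eq_zero_iff_of_nonneg hnn).mp hzero m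
        (Finset.mem_erase.mpr ⟨hm, Finset.mem_univ _⟩)
      exact this
    have hd := R.d_pos m
    rcases mul_eq_zero.mp hterm with h' | h'
    · exact_mod_cast h'
    · exact absurd h' (ne_of_gt hd)

/-- If `δ` has FP-dimension 1 then left tensoring with `δ` permutes the simples:
for every `Y` there is a unique `Z` with `N δ Y Z ≠ 0`; moreover `N δ Y Z = 1`
and `N δ* Z Y = 1`. -/
lemma inv_pair {δ : I} (h : R.d δ = 1) (Y : I) :
    ∃ Z : I, R.N δ Y Z = 1 ∧ (∀ Z', R.N δ Y Z' ≠ 0 → Z' = Z) ∧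
      R.N (R.dual δ) Z Y = 1 := by
  have hdd : R.d (R.dual δ) = 1 := by rw [R.d_dual]; exact h
  -- E1 : ∑ m, N δ Y m * N δ* m Y = 1
  have E1 : ∑ m, R.N δ Y m * R.N (R.dual δ) m Y = 1 := by
    have ha := R.assoc (R.dual δ) δ Y Y
    have hl : ∑ m, R.N (R.dual δ) δ m * R.N m Y Y = 1 := by
      have : ∀ m : I, R.N (R.dual δ) δ m * R.N m Y Y
          = if m = R.one then R.N R.one Y Y else 0 := by
        intro m
        rw [R.unit_absorb h]
        by_cases hm : m = R.one <;> simp [hm]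
      rw [Finset.sum_congr rfl (fun m _ => this m), Finset.sum_ite_eq' Finset.univ R.one]
      simp [R.N_one_left]
    rw [hl] at ha
    exact ha.symm
  -- extract the unique nonzero term
  have hex : ∃ m0, R.N δ Y m0 * R.N (R.dual δ) m0 Y ≠ 0 := by
    by_contra hc
    push_neg at hc
    rw [Finset.sum_eq_zero (fun m _ => hc m)] at E1
    exact one_ne_zero E1.symm
  obtain ⟨m0, hm0⟩ := hex
  have hterm1 : R.N δ Y m0 * R.N (R.dual δ) m0 Y = 1 := by
    have hle : R.N δ Y m0 * R.N (R.dual δ) m0 Y ≤ 1 := by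
      rw [← E1]
      exact Finset.single_le_sum (f := fun m => R.N δ Y m * R.N (R.dual δ) m Y)
        (fun m _ => Nat.zero_le _) (Finset.mem_univ m0)
    omega
  have hN1 : R.N δ Y m0 = 1 := Nat.eq_one_of_mul_eq_one_right hterm1
  have hN2 : R.N (R.dual δ) m0 Y = 1 := Nat.eq_one_of_mul_eq_one_left hterm1
  refine ⟨m0, hN1, ?_, hN2⟩
  intro Z' hZ'
  by_contra hne
  -- dimension argument
  have hdm0 : R.d Y ≤ R.d m0 := by
    have := R.d_mul (R.dual δ) m0
    rw [hdd, one_mul] at this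
    rw [this]
    have := Finset.single_le_sum
      (f := fun l => (R.N (R.dual δ) m0 l : ℝ) * R.d l)
      (fun l _ => mul_nonneg (Nat.cast_nonneg _) (le_of_lt (R.d_pos l)))
      (Finset.mem_univ Y)
    simpa [hN2] using this
  have hsumY : ∑ m, (R.N δ Y m : ℝ) * R.d m = R.d Y := by
    rw [← R.d_mul, h, one_mul]
  have hpair : R.d m0 + R.d Z' ≤ R.d Y := by
    rw [← hsumY]
    have hsub : ({m0, Z'} : Finset I) ⊆ Finset.univ := Finset.subset_univ _
    have := Finset.sum_le_sum_of_subset_of_nonneg hsub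
      (f := fun m => (R.N δ Y m : ℝ) * R.d m)
      (fun m _ _ => mul_nonneg (Nat.cast_nonneg _) (le_of_lt (R.d_pos m)))
    rw [Finset.sum_pair (fun he => hne he.symm)] at this
    refine le_trans ?_ this
    have h1 : R.d m0 ≤ (R.N δ Y m0 : ℝ) * R.d m0 := by
      rw [hN1]; norm_num
    have h2 : R.d Z' ≤ (R.N δ Y Z' : ℝ) * R.d Z' := by
      have : (1 : ℝ) ≤ (R.N δ Y Z' : ℝ) := by
        have : 1 ≤ R.N δ Y Z' := Nat.one_le_iff_ne_zero.mpr hZ'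
        exact_mod_cast this
      nlinarith [R.d_pos Z']
    linarith
  have := R.d_pos Z'
  linarith

end FusionRing

namespace GradedFusionRing
variable {G I : Type} [Group G] [Fintype G] [DecidableEq G]
  [Fintype I] [DecidableEq I] (R : GradedFusionRing G I)

lemma deg_dual (i : I) : R.deg (R.dual i) = (R.deg i)⁻¹ := by
  have h : R.N i (R.dual i) R.one = 1 := by
    rw [R.N_unit]; simp
  have h2 := R.deg_mul i (R.dual i) R.one (by rw [h]; exact one_ne_zero)
  rw [R.deg_one] at h2
  exact eq_inv_of_mul_eq_one_right h2.symm

/-- Every graded component has the same total squared dimension. -/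
lemma sum_sq (X : I) :
    ∑ j ∈ Finset.univ.filter (fun j => R.deg j = R.deg X), R.d j ^ 2
      = ∑ j ∈ Finset.univ.filter (fun j => R.deg j = 1), R.d j ^ 2 := by
  have hXpos : 0 < R.d X := R.toFusionRing.d_pos X
  have key : ∀ i : I, ∑ j ∈ Finset.univ.filter (fun j => R.deg j = R.deg X),
      (R.N X i j : ℝ) * R.d j = if R.deg i = 1 then R.d X * R.d i else 0 := by
    intro i
    by_cases hi : R.deg i = 1
    · rw [if_pos hi]
      have : ∑ j ∈ Finset.univ.filter (fun j => R.deg j = R.deg X),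
          (R.N X i j : ℝ) * R.d j = ∑ j, (R.N X i j : ℝ) * R.d j := by
        apply Finset.sum_subset (Finset.filter_subset _ _)
        intro j _ hj
        rw [Finset.mem_filter] at hj
        push_neg at hj
        have hj' := hj (Finset.mem_univ j)
        have : R.N X i j = 0 := by
          by_contra hc
          exact hj' (by rw [R.deg_mul X i j hc, hi, mul_one])
        rw [this]; push_cast; ring
      rw [this, ← R.d_mul]
    · rw [if_neg hi]
      apply Finset.sum_eq_zero
      intro j hj
      rw [Finset.mem_filter] at hj
      have : R.N X i j = 0 := by
        by_contra hc
        have := R.deg_mul X i j hc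
        rw [hj.2] at this
        have h3 : R.deg X * 1 = R.deg X * R.deg i := by rw [mul_one]; exact this
        exact hi (mul_left_cancel h3).symm
      rw [this]; push_cast; ring
  have S1 : ∑ j ∈ Finset.univ.filter (fun j => R.deg j = R.deg X),
      R.d j * (R.d X * R.d j) = R.d X * ∑ j ∈ Finset.univ.filter
        (fun j => R.deg j = R.deg X), R.d j ^ 2 := by
    rw [Finset.mul_sum]
    apply Finset.sum_congr rfl
    intro j _; ring
  have S2 : ∑ j ∈ Finset.univ.filter (fun j => R.deg j = R.deg X),
      R.d j * (R.d X * R.d j)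
      = R.d X * ∑ j ∈ Finset.univ.filter (fun j => R.deg j = 1), R.d j ^ 2 := by
    calc ∑ j ∈ Finset.univ.filter (fun j => R.deg j = R.deg X), R.d j * (R.d X * R.d j)
        = ∑ j ∈ Finset.univ.filter (fun j => R.deg j = R.deg X),
            R.d j * (∑ i, (R.N X i j : ℝ) * R.d i) := by
          apply Finset.sum_congr rfl
          intro j _
          rw [R.toFusionRing.mid_eigen X j]
      _ = ∑ i, R.d i * ∑ j ∈ Finset.univ.filter (fun j => R.deg j = R.deg X),
            (R.N X i j : ℝ) * R.d j := by
          simp_rw [Finset.mul_sum]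
          rw [Finset.sum_comm]
          apply Finset.sum_congr rfl
          intro i _
          apply Finset.sum_congr rfl
          intro j _
          ring
      _ = ∑ i, R.d i * (if R.deg i = 1 then R.d X * R.d i else 0) := by
          apply Finset.sum_congr rfl
          intro i _
          rw [key i]
      _ = ∑ i ∈ Finset.univ.filter (fun i => R.deg i = 1), R.d i * (R.d X * R.d i) := by
          rw [Finset.sum_filter]
          apply Finset.sum_congr rfl
          intro i _
          by_cases hi : R.deg i = 1 <;> simp [hi]
      _ = R.d X * ∑ j ∈ Finset.univ.filter (fun j => R.deg j = 1), R.d j ^ 2 := by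
          rw [Finset.mul_sum]
          apply Finset.sum_congr rfl
          intro j _; ring
  have := S1.symm.trans S2
  exact mul_left_cancel₀ (ne_of_gt hXpos) this

end GradedFusionRing

set_option maxHeartbeats 1600000 in
/-- every faithful `G`-extension `C` of the rank-3 fusion category with
fusion rules `α² = 1 ⊕ β`, `β² = 1 ⊕ α ⊕ β`, `αβ = βα = α ⊕ β` admits an exact
factorization `C = C_pt • D`: every simple object of `C` is uniquely of the form
`δ ⊗ Y` with `δ` an invertible simple and `Y ∈ Irr D`. -/
theorem stmt11 {G I : Type} [Group G] [Fintype G] [DecidableEq G]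
    [Fintype I] [DecidableEq I] (R : GradedFusionRing G I)
    (α β : I) (hα : R.deg α = 1) (hβ : R.deg β = 1)
    (hne1 : α ≠ R.one) (hne2 : β ≠ R.one) (hne3 : α ≠ β)
    (hrank : ∀ i : I, R.deg i = 1 → i = R.one ∨ i = α ∨ i = β)
    (hαα : ∀ k : I, R.N α α k = (if k = R.one then 1 else 0) + (if k = β then 1 else 0))
    (hββ : ∀ k : I, R.N β β k =
      (if k = R.one then 1 else 0) + (if k = α then 1 else 0) + (if k = β then 1 else 0))
    (hαβ : ∀ k : I, R.N α β k = (if k = α then 1 else 0) + (if k = β then 1 else 0))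
    (hβα : ∀ k : I, R.N β α k = (if k = α then 1 else 0) + (if k = β then 1 else 0)) :
    ∀ Z : I, ∃! p : I × I,
      R.d p.1 = 1 ∧ R.deg p.2 = 1 ∧ R.N p.1 p.2 Z ≠ 0 := by
  have hx1 : 1 ≤ R.d α := R.one_le_d α
  have hy1 : 1 ≤ R.d β := R.one_le_d β
  have hxpos : 0 < R.d α := R.toFusionRing.d_pos α
  have hypos : 0 < R.d β := R.toFusionRing.d_pos β
  -- fusion-rule dimension equations
  have eq1 : R.d α * R.d α = 1 + R.d β := by
    rw [R.d_mul α α]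
    have h : ∀ k : I, ((R.N α α k : ℝ)) * R.d k
        = (if k = R.one then (1:ℝ) else 0) * R.d k + (if k = β then (1:ℝ) else 0) * R.d k := by
      intro k; rw [hαα k]; push_cast; ring
    rw [Finset.sum_congr rfl (fun k _ => h k), Finset.sum_add_distrib]
    simp [ite_mul, R.d_one]
  have eq2 : R.d α * R.d β = R.d α + R.d β := by
    rw [R.d_mul α β]
    have h : ∀ k : I, ((R.N α β k : ℝ)) * R.d k
        = (if k = α then (1:ℝ) else 0) * R.d k + (if k = β then (1:ℝ) else 0) * R.d k := by
      intro k; rw [hαβ k]; push_cast; ring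
    rw [Finset.sum_congr rfl (fun k _ => h k), Finset.sum_add_distrib]
    simp [ite_mul]
  have hxgt : 1 < R.d α := by
    rcases eq_or_lt_of_le hx1 with h | h
    · exfalso; rw [← h, one_mul] at eq2; linarith
    · exact h
  have hy : R.d β = R.d α * R.d α - 1 := by linarith
  have hcube : R.d α * (R.d α * R.d α) = R.d α * R.d α + 2 * R.d α - 1 := by
    have h := eq2
    rw [hy] at h
    nlinarith [h]
  have hx2 : R.d α < 2 := by
    by_contra hc
    push_neg at hc
    nlinarith [hcube, mul_nonneg (sub_nonneg.2 hc)
      (by positivity : (0:ℝ) ≤ R.d α * R.d α + R.d α)]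
  have hygt : 1 < R.d β := by
    by_contra hc
    push_neg at hc
    have h2 : R.d α * R.d α ≤ 2 := by linarith [hy]
    nlinarith [hcube, h2, hxgt]
  have hyx : R.d α < R.d β := by
    by_contra hc
    push_neg at hc
    nlinarith [hy, hc, hcube, hxgt]
  have hy3 : R.d β < 3 := by nlinarith [hy, hx2, hxgt]
  have hy2 : R.d β ≠ 2 := by
    intro hc
    nlinarith [hy, hcube, hx2, hc, hxgt]
  have hy2x : R.d β < 2 * R.d α := by
    nlinarith [hy, mul_pos (sub_pos.2 hx2) (sub_pos.2 hxgt), hx2]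
  -- self-duality of α and β
  have hdα : R.dual α = α := by
    have h1 : R.deg (R.dual α) = 1 := by rw [R.deg_dual, hα, inv_one]
    rcases hrank _ h1 with h | h | h
    · exfalso
      have h2 := R.d_dual α
      rw [h, R.d_one] at h2
      linarith
    · exact h
    · exfalso
      have h2 := R.d_dual α
      rw [h] at h2
      linarith
  have hdβ : R.dual β = β := by
    have h1 : R.deg (R.dual β) = 1 := by rw [R.deg_dual, hβ, inv_one]
    rcases hrank _ h1 with h | h | h
    · exfalso
      have h2 := R.d_dual β
      rw [h, R.d_one] at h2
      linarith
    · exfalso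
      have h2 := R.d_dual β
      rw [h] at h2
      linarith
    · exact h
  intro Z
  -- choose δ of minimal dimension in the component of Z
  obtain ⟨δ, hδT, hδmin⟩ := Finset.exists_min_image
    (Finset.univ.filter (fun i => R.deg i = R.deg Z)) R.d
    ⟨Z, Finset.mem_filter.mpr ⟨Finset.mem_univ _, rfl⟩⟩
  have hδg : R.deg δ = R.deg Z := (Finset.mem_filter.mp hδT).2
  have hmin : ∀ m : I, R.deg m = R.deg Z → R.d δ ≤ R.d m := fun m hm =>
    hδmin m (Finset.mem_filter.mpr ⟨Finset.mem_univ m, hm⟩)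
  have hδpos : 0 < R.d δ := R.toFusionRing.d_pos δ
  have hcycα : R.N (R.dual δ) δ α = R.N δ α δ := by
    rw [R.toFusionRing.cyclic (R.dual δ) δ α, hdα, R.dual_dual]
  have hcycβ : R.N (R.dual δ) δ β = R.N δ β δ := by
    rw [R.toFusionRing.cyclic (R.dual δ) δ β, hdβ, R.dual_dual]
  -- δ* ⊗ δ decomposition
  have hδδ : R.d δ * R.d δ = 1 + (R.N δ α δ : ℝ) * R.d α + (R.N δ β δ : ℝ) * R.d β := by
    have hm := R.d_mul (R.dual δ) δ
    rw [R.d_dual] at hm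
    have hsub : ∑ k, (R.N (R.dual δ) δ k : ℝ) * R.d k
        = ∑ k ∈ ({R.one, α, β} : Finset I), (R.N (R.dual δ) δ k : ℝ) * R.d k := by
      symm
      apply Finset.sum_subset (Finset.subset_univ _)
      intro k _ hk
      have hNk : R.N (R.dual δ) δ k = 0 := by
        by_contra hc
        have hdeg := R.deg_mul _ _ _ hc
        rw [R.deg_dual, inv_mul_cancel] at hdeg
        rcases hrank k hdeg with h | h | h <;> (subst h; exact absurd (by simp) hk)
      rw [hNk]; push_cast; ring
    rw [hsub, Finset.sum_insert (by simp [Ne.symm hne1, Ne.symm hne2]),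
      Finset.sum_insert (by simp [hne3]), Finset.sum_singleton] at hm
    have hNone : R.N (R.dual δ) δ R.one = 1 := by
      rw [R.N_unit]; simp [R.dual_dual]
    rw [hNone, R.d_one, hcycα, hcycβ] at hm
    push_cast at hm
    linarith [hm]
  -- generic facts about δ ⊗ α and δ ⊗ β
  have hdegδα : ∀ m, R.N δ α m ≠ 0 → R.deg m = R.deg Z := by
    intro m hm
    rw [R.deg_mul δ α m hm, hδg, hα, mul_one]
  have hdegδβ : ∀ m, R.N δ β m ≠ 0 → R.deg m = R.deg Z := by
    intro m hm
    rw [R.deg_mul δ β m hm, hδg, hβ, mul_one]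
  have hnn : ∀ (c : I) (m : I), (0:ℝ) ≤ (R.N δ c m : ℝ) * R.d m :=
    fun c m => mul_nonneg (Nat.cast_nonneg _) (R.toFusionRing.d_pos m).le
  have hsumα : (∑ m ∈ Finset.univ.erase δ, (R.N δ α m : ℝ) * R.d m)
      + (R.N δ α δ : ℝ) * R.d δ = R.d δ * R.d α := by
    rw [Finset.sum_erase_add _ _ (Finset.mem_univ δ)]
    exact (R.d_mul δ α).symm
  have hsumβ : (∑ m ∈ Finset.univ.erase δ, (R.N δ β m : ℝ) * R.d m)
      + (R.N δ β δ : ℝ) * R.d δ = R.d δ * R.d β := by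
    rw [Finset.sum_erase_add _ _ (Finset.mem_univ δ)]
    exact (R.d_mul δ β).symm
  have hrest : ∀ c : I, (∀ m, R.N δ c m ≠ 0 → R.deg m = R.deg Z) →
      (∑ m ∈ Finset.univ.erase δ, (R.N δ c m : ℝ) * R.d m = 0)
      ∨ R.d δ ≤ ∑ m ∈ Finset.univ.erase δ, (R.N δ c m : ℝ) * R.d m := by
    intro c hdegc
    by_cases hz : ∀ m ∈ Finset.univ.erase δ, (R.N δ c m : ℝ) * R.d m = 0
    · exact Or.inl (Finset.sum_eq_zero hz)
    · right
      push_neg at hz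
      obtain ⟨m, hmm, hm0⟩ := hz
      have hN : R.N δ c m ≠ 0 := by
        intro h0; exact hm0 (by rw [h0]; push_cast; ring)
      have h1 : (1:ℝ) ≤ (R.N δ c m : ℝ) := by
        exact_mod_cast Nat.one_le_iff_ne_zero.mpr hN
      have h2 : R.d m ≤ (R.N δ c m : ℝ) * R.d m := by
        nlinarith [R.toFusionRing.d_pos m]
      have h3 : (R.N δ c m : ℝ) * R.d m
          ≤ ∑ m ∈ Finset.univ.erase δ, (R.N δ c m : ℝ) * R.d m := by
        simpa using Finset.single_le_sum (f := fun m => (R.N δ c m : ℝ) * R.d m)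
          (fun m _ => hnn c m) hmm
      linarith [hmin m (hdegc m hN)]
  -- N δ α δ = 0
  have ha0 : R.N δ α δ = 0 := by
    rcases hrest α hdegδα with h0 | hge
    · exfalso
      rw [h0, zero_add, mul_comm (R.d δ) (R.d α)] at hsumα
      have hcast : (R.N δ α δ : ℝ) = R.d α := mul_right_cancel₀ (ne_of_gt hδpos) hsumα
      have h1 : (1:ℝ) < (R.N δ α δ : ℝ) := by rw [hcast]; exact hxgt
      have h2 : (R.N δ α δ : ℝ) < 2 := by rw [hcast]; exact hx2
      have h1' : 1 < R.N δ α δ := by exact_mod_cast h1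
      have h2' : R.N δ α δ < 2 := by exact_mod_cast h2
      omega
    · by_contra hc
      have h1 : (1:ℝ) ≤ (R.N δ α δ : ℝ) := by
        exact_mod_cast Nat.one_le_iff_ne_zero.mpr hc
      linarith [hsumα, hge, mul_le_mul_of_nonneg_right h1 hδpos.le,
        mul_lt_mul_of_pos_left hx2 hδpos]
  -- N δ β δ ≤ 1
  have hble : R.N δ β δ ≤ 1 := by
    rcases hrest β hdegδβ with h0 | hge
    · exfalso
      rw [h0, zero_add, mul_comm (R.d δ) (R.d β)] at hsumβ
      have hcast : (R.N δ β δ : ℝ) = R.d β := mul_right_cancel₀ (ne_of_gt hδpos) hsumβ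
      have h1 : (1:ℝ) < (R.N δ β δ : ℝ) := by rw [hcast]; exact hygt
      have h3 : (R.N δ β δ : ℝ) < 3 := by rw [hcast]; exact hy3
      have h1' : 1 < R.N δ β δ := by exact_mod_cast h1
      have h3' : R.N δ β δ < 3 := by exact_mod_cast h3
      have hb2 : R.N δ β δ = 2 := by omega
      apply hy2
      rw [← hcast, hb2]
      norm_num
    · by_contra hc
      push_neg at hc
      have h1 : (2:ℝ) ≤ (R.N δ β δ : ℝ) := by exact_mod_cast hc
      linarith [hsumβ, hge, mul_le_mul_of_nonneg_right h1 hδpos.le,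
        mul_lt_mul_of_pos_left hy3 hδpos]
  -- N δ β δ = 0 : exclude the case N δ β δ = 1
  have hb0 : R.N δ β δ = 0 := by
    rcases Nat.eq_zero_or_pos (R.N δ β δ) with h | h
    · exact h
    exfalso
    have hb1 : R.N δ β δ = 1 := le_antisymm hble h
    -- then d δ = d α
    have hδα : R.d δ = R.d α := by
      have h2 : (R.d δ - R.d α) * (R.d δ + R.d α) = 0 := by
        have h3 := hδδ
        rw [ha0, hb1] at h3
        push_cast at h3
        linear_combination h3 - eq1
      rcases mul_eq_zero.mp h2 with h4 | h4
      · linarith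
      · linarith
    -- analysis of δ ⊗ α : a single simple k of dimension dα²
    have hsumαtot : ∑ m, (R.N δ α m : ℝ) * R.d m = R.d δ * R.d α := (R.d_mul δ α).symm
    have hkex : ∃ k, R.N δ α k ≠ 0 := by
      by_contra hc
      push_neg at hc
      have h5 : ∑ m, (R.N δ α m : ℝ) * R.d m = 0 :=
        Finset.sum_eq_zero (fun m _ => by rw [hc m]; push_cast; ring)
      rw [hsumαtot] at h5
      nlinarith [hδpos, hxpos]
    obtain ⟨k, hk⟩ := hkex
    have hkdeg : R.deg k = R.deg Z := hdegδα k hk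
    have hkmin : R.d δ ≤ R.d k := hmin k hkdeg
    have hk1 : R.N δ α k = 1 := by
      by_contra hc
      have h2 : 2 ≤ R.N δ α k := by omega
      have h2' : (2:ℝ) ≤ (R.N δ α k : ℝ) := by exact_mod_cast h2
      have h3 : (R.N δ α k : ℝ) * R.d k ≤ ∑ m, (R.N δ α m : ℝ) * R.d m := by
        simpa using Finset.single_le_sum (f := fun m => (R.N δ α m : ℝ) * R.d m)
          (fun m _ => hnn α m) (Finset.mem_univ k)
      rw [hsumαtot] at h3
      have hprod : R.d δ * R.d α = R.d α * R.d α := by rw [hδα]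
      linarith [hkmin, hδα, hprod,
        mul_le_mul_of_nonneg_right h2' (R.toFusionRing.d_pos k).le,
        mul_lt_mul_of_pos_left hx2 hxpos]
    have hkuniq : ∀ m, m ≠ k → R.N δ α m = 0 := by
      intro m hmne
      by_contra hc
      have h1 : (1:ℝ) ≤ (R.N δ α m : ℝ) := by
        exact_mod_cast Nat.one_le_iff_ne_zero.mpr hc
      have hmmin : R.d δ ≤ R.d m := hmin m (hdegδα m hc)
      have hp := Finset.sum_le_sum_of_subset_of_nonneg
        (Finset.subset_univ ({k, m} : Finset I)) (fun i _ _ => hnn α i)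
      rw [Finset.sum_pair (fun h' => hmne h'.symm), hsumαtot] at hp
      have hk1' : (R.N δ α k : ℝ) = 1 := by exact_mod_cast hk1
      rw [hk1', one_mul] at hp
      have hprod : R.d δ * R.d α = R.d α * R.d α := by rw [hδα]
      linarith [hkmin, hmmin, hδα, hprod,
        mul_le_mul_of_nonneg_right h1 (R.toFusionRing.d_pos m).le,
        mul_lt_mul_of_pos_left hx2 hxpos]
    have hdk : R.d k = R.d α * R.d α := by
      have h5 : ∑ m, (R.N δ α m : ℝ) * R.d m = (R.N δ α k : ℝ) * R.d k :=
        Finset.sum_eq_single k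
          (fun m _ hm => by rw [hkuniq m hm]; push_cast; ring)
          (fun h' => absurd (Finset.mem_univ k) h')
      rw [hsumαtot, hk1] at h5
      push_cast at h5
      rw [hδα] at h5
      linarith
    have hδk : δ ≠ k := by
      intro h'
      rw [← h', ha0] at hk1
      exact zero_ne_one hk1
    -- analysis of δ ⊗ β : δ plus a single simple j of dimension dβ
    have hrestval : ∑ m ∈ Finset.univ.erase δ, (R.N δ β m : ℝ) * R.d m = R.d β := by
      have h5 := hsumβ
      rw [hb1] at h5
      push_cast at h5
      rw [hδα] at h5
      linarith [eq2]
    have hjex : ∃ j ∈ Finset.univ.erase δ, R.N δ β j ≠ 0 := by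
      by_contra hc
      push_neg at hc
      have h5 : ∑ m ∈ Finset.univ.erase δ, (R.N δ β m : ℝ) * R.d m = 0 :=
        Finset.sum_eq_zero (fun m hm => by rw [hc m hm]; push_cast; ring)
      rw [hrestval] at h5
      linarith
    obtain ⟨j, hjmem, hj⟩ := hjex
    have hjne : j ≠ δ := (Finset.mem_erase.mp hjmem).1
    have hjmin : R.d δ ≤ R.d j := hmin j (hdegδβ j hj)
    have hjuniq : ∀ m ∈ Finset.univ.erase δ, m ≠ j → R.N δ β m = 0 := by
      intro m hm hmj
      by_contra hc
      have h1 : (1:ℝ) ≤ (R.N δ β m : ℝ) := by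
        exact_mod_cast Nat.one_le_iff_ne_zero.mpr hc
      have h1j : (1:ℝ) ≤ (R.N δ β j : ℝ) := by
        exact_mod_cast Nat.one_le_iff_ne_zero.mpr hj
      have hmmin : R.d δ ≤ R.d m := hmin m (hdegδβ m hc)
      have hsub2 : ({j, m} : Finset I) ⊆ Finset.univ.erase δ := by
        intro i hi
        rcases Finset.mem_insert.mp hi with h' | h'
        · subst h'; exact hjmem
        · rw [Finset.mem_singleton] at h'
          subst h'; exact hm
      have hp := Finset.sum_le_sum_of_subset_of_nonneg hsub2 (fun i _ _ => hnn β i)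
      rw [Finset.sum_pair (fun h' => hmj h'.symm), hrestval] at hp
      linarith [hjmin, hmmin, hδα, hy2x, hp,
        mul_le_mul_of_nonneg_right h1 (R.toFusionRing.d_pos m).le,
        mul_le_mul_of_nonneg_right h1j (R.toFusionRing.d_pos j).le]
    have hNj1 : R.N δ β j = 1 := by
      by_contra hc
      have h2 : 2 ≤ R.N δ β j := by
        have := Nat.one_le_iff_ne_zero.mpr hj
        omega
      have h2' : (2:ℝ) ≤ (R.N δ β j : ℝ) := by exact_mod_cast h2
      have h3 : (R.N δ β j : ℝ) * R.d j
          ≤ ∑ m ∈ Finset.univ.erase δ, (R.N δ β m : ℝ) * R.d m := by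
        simpa using Finset.single_le_sum (f := fun m => (R.N δ β m : ℝ) * R.d m)
          (fun m _ => hnn β m) hjmem
      rw [hrestval] at h3
      linarith [hjmin, hδα, hy2x,
        mul_le_mul_of_nonneg_right h2' (R.toFusionRing.d_pos j).le]
    have hdj : R.d j = R.d β := by
      have h5 : ∑ m ∈ Finset.univ.erase δ, (R.N δ β m : ℝ) * R.d m
          = (R.N δ β j : ℝ) * R.d j :=
        Finset.sum_eq_single_of_mem j hjmem
          (fun m hm hmj => by rw [hjuniq m hm hmj]; push_cast; ring)
      rw [hrestval, hNj1] at h5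
      push_cast at h5
      linarith
    have hjk : j ≠ k := by
      intro h'
      rw [h', hdk] at hdj
      linarith [eq1]
    -- total squared dimension of the component: contradiction
    have hv := R.sum_sq δ
    simp only [hδg] at hv
    have hT1 : Finset.univ.filter (fun i => R.deg i = (1:G)) = {R.one, α, β} := by
      ext i
      simp only [Finset.mem_filter, Finset.mem_univ, true_and, Finset.mem_insert,
        Finset.mem_singleton]
      constructor
      · exact hrank i
      · rintro (rfl | rfl | rfl)
        · exact R.deg_one
        · exact hα
        · exact hβ
    rw [hT1, Finset.sum_insert (by simp [Ne.symm hne1, Ne.symm hne2]),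
      Finset.sum_insert (by simp [hne3]), Finset.sum_singleton, R.d_one] at hv
    have hsubT : ({δ, j, k} : Finset I) ⊆ Finset.univ.filter
        (fun i => R.deg i = R.deg Z) := by
      intro m hm
      rcases Finset.mem_insert.mp hm with h' | h'
      · rw [h']; exact Finset.mem_filter.mpr ⟨Finset.mem_univ _, hδg⟩
      rcases Finset.mem_insert.mp h' with h'' | h''
      · rw [h'']; exact Finset.mem_filter.mpr ⟨Finset.mem_univ _, hdegδβ j hj⟩
      · rw [Finset.mem_singleton] at h''
        rw [h'']; exact Finset.mem_filter.mpr ⟨Finset.mem_univ _, hkdeg⟩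
    have hlb := Finset.sum_le_sum_of_subset_of_nonneg hsubT
      (fun i _ _ => sq_nonneg (R.d i))
    rw [Finset.sum_insert (by simp [Ne.symm hjne, hδk]),
      Finset.sum_insert (by simp [hjk]), Finset.sum_singleton, hv] at hlb
    rw [hδα, hdj, hdk] at hlb
    nlinarith [hlb, hygt, eq1]
  -- δ is invertible
  have hδ1 : R.d δ = 1 := by
    have h2 : (R.d δ - 1) * (R.d δ + 1) = 0 := by
      have h3 := hδδ
      rw [ha0, hb0] at h3
      push_cast at h3
      linear_combination h3
    rcases mul_eq_zero.mp h2 with h4 | h4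
    · linarith
    · linarith
  -- assemble the exact factorization for Z
  have hdualδ1 : R.d (R.dual δ) = 1 := by rw [R.d_dual]; exact hδ1
  obtain ⟨W, hW1, hWu, hW2⟩ := R.toFusionRing.inv_pair hdualδ1 Z
  rw [R.dual_dual] at hW2
  have hdegW : R.deg W = 1 := by
    have h1 := R.deg_mul _ _ _ (show R.N (R.dual δ) Z W ≠ 0 by rw [hW1]; exact one_ne_zero)
    rw [R.deg_dual, hδg, inv_mul_cancel] at h1
    exact h1
  refine ⟨(δ, W), ⟨hδ1, hdegW, by rw [hW2]; exact one_ne_zero⟩, ?_⟩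
  rintro ⟨δ', Y'⟩ ⟨hd', hdegY', hN'⟩
  simp only at hd' hdegY' hN'
  have hdegδ' : R.deg δ' = R.deg Z := by
    have h1 := R.deg_mul _ _ _ hN'
    rw [hdegY', mul_one] at h1
    exact h1.symm
  obtain ⟨ε, hε1, hεu, hε2⟩ := R.toFusionRing.inv_pair hdualδ1 δ'
  rw [R.dual_dual] at hε2
  have hdegε : R.deg ε = 1 := by
    have h1 := R.deg_mul _ _ _ (show R.N (R.dual δ) δ' ε ≠ 0 by rw [hε1]; exact one_ne_zero)
    rw [R.deg_dual, hδg, hdegδ', inv_mul_cancel] at h1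
    exact h1
  have hdε : R.d ε = 1 := by
    have hm := R.d_mul (R.dual δ) δ'
    rw [hdualδ1, hd', one_mul] at hm
    have h5 : ∑ m, (R.N (R.dual δ) δ' m : ℝ) * R.d m = R.d ε := by
      rw [Finset.sum_eq_single ε
        (fun m _ hm' => by
          have h6 : R.N (R.dual δ) δ' m = 0 := by
            by_contra hc
            exact hm' (hεu m hc)
          rw [h6]; push_cast; ring)
        (fun h' => absurd (Finset.mem_univ ε) h')]
      rw [hε1]; push_cast; ring
    rw [h5] at hm
    exact hm.symm
  have hεone : ε = R.one := by
    rcases hrank ε hdegε with h | h | h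
    · exact h
    · exfalso; rw [h] at hdε; linarith
    · exfalso; rw [h] at hdε; linarith
  have hδ'δ : δ' = δ := by
    rw [hεone, R.N_one_right] at hε2
    by_contra hc
    rw [if_neg hc] at hε2
    exact zero_ne_one hε2
  obtain ⟨Z0, hZ0a, hZ0u, hZ0b⟩ := R.toFusionRing.inv_pair hδ1 Y'
  have hZZ0 : Z = Z0 := hZ0u Z (by rw [hδ'δ] at hN'; exact hN')
  have hY'W : Y' = W := hWu Y' (by rw [hZZ0, hZ0b]; exact one_ne_zero)
  rw [Prod.ext_iff]
  exact ⟨hδ'δ, hY'W⟩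
end

section
/- Let I be an Ising category, with Irr(I) = {1, δ, X}, fusion rules δ⊗δ = 1, δ⊗X = X⊗δ = X, X⊗X = 1⊕δ. Then every faithful G-extension C = ⊕_{g∈G} C_g of I is a slightly trivial extension of I: every component C_g contains an invertible simple object. -/
open scoped BigOperators
open Real

namespace IsingAux

variable {G I : Type} [Group G] [Fintype G] [DecidableEq G]
    [Fintype I] [DecidableEq I] (R : GradedFusionRing G I)

lemma d_pos (i : I) : 0 < R.d i := lt_of_lt_of_le one_pos (R.one_le_d i)

/-- cyclic symmetry of fusion multiplicities -/
lemma cyc (i j k : I) : R.N i j (R.dual k) = R.N j k (R.dual i) := by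
  have h := R.assoc i j k R.one
  have e1 : ∀ m : I, R.N m k R.one = if m = R.dual k then 1 else 0 := by
    intro m
    rw [R.N_unit]
    congr 1
    simp only [eq_iff_iff]
    constructor
    · intro h'; rw [h', R.dual_dual]
    · intro h'; rw [h', R.dual_dual]
  have e2 : ∀ m : I, R.N i m R.one = if m = R.dual i then 1 else 0 := fun m => R.N_unit i m
  simp only [e1, e2, mul_ite, mul_one, mul_zero, Finset.sum_ite_eq', Finset.mem_univ,
    if_true] at h
  exact h

lemma cyc2 (a i k : I) : R.N a i k = R.N (R.dual k) a (R.dual i) := by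
  have h1 : R.N a i k = R.N i (R.dual k) (R.dual a) := by
    have := cyc R a i (R.dual k)
    rwa [R.dual_dual] at this
  rw [h1]
  exact cyc R i (R.dual k) a

/-- Lemma A: Frobenius-reciprocity style dimension identity. -/
lemma lemA (a k : I) : ∑ i : I, (R.N a i k : ℝ) * R.d i = R.d a * R.d k := by
  have e : Function.Involutive R.dual := R.dual_dual
  calc ∑ i : I, (R.N a i k : ℝ) * R.d i
      = ∑ i : I, (R.N (R.dual k) a (R.dual i) : ℝ) * R.d (R.dual i) := by
        refine Finset.sum_congr rfl fun i _ => ?_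
        rw [← cyc2, R.d_dual]
    _ = ∑ m : I, (R.N (R.dual k) a m : ℝ) * R.d m := by
        exact Fintype.sum_equiv e.toPerm _ _ (fun i => rfl)
    _ = R.d (R.dual k) * R.d a := (R.d_mul _ _).symm
    _ = R.d a * R.d k := by rw [R.d_dual, mul_comm]

lemma degDual (i : I) : R.deg (R.dual i) = (R.deg i)⁻¹ := by
  have h : R.N i (R.dual i) R.one ≠ 0 := by
    rw [R.N_unit]; simp
  have := R.deg_mul i (R.dual i) R.one h
  rw [R.deg_one] at this
  exact eq_inv_of_mul_eq_one_right this.symm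

end IsingAux

namespace IsingAux

variable {G I : Type} [Group G] [Fintype G] [DecidableEq G]
    [Fintype I] [DecidableEq I] (R : GradedFusionRing G I)

/-- total FP-dimension of the component of degree `g` -/
noncomputable def Sg (g : G) : ℝ :=
  ∑ i ∈ Finset.univ.filter (fun i => R.deg i = g), R.d i ^ 2

/-- restrict a fusion sum to the component where it is supported -/
lemma sum_restrict (a b : I) (f : I → ℝ) :
    ∑ k ∈ Finset.univ.filter (fun k => R.deg k = R.deg a * R.deg b),
        (R.N a b k : ℝ) * f k = ∑ k : I, (R.N a b k : ℝ) * f k := by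
  refine Finset.sum_subset (Finset.subset_univ _) ?_
  intro k _ hk
  simp only [Finset.mem_filter, Finset.mem_univ, true_and] at hk
  have : R.N a b k = 0 := by
    by_contra h
    exact hk (R.deg_mul a b k h)
  rw [this]; push_cast; ring

lemma S_const (a : I) (g : G) : Sg R (R.deg a * g) = Sg R g := by
  have hd : R.d a ≠ 0 := ne_of_gt (d_pos R a)
  refine mul_left_cancel₀ hd ?_
  have key : R.d a * Sg R (R.deg a * g)
      = ∑ i ∈ Finset.univ.filter (fun i => R.deg i = g),
          ∑ k ∈ Finset.univ.filter (fun k => R.deg k = R.deg a * g),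
            (R.N a i k : ℝ) * R.d i * R.d k := by
    rw [Sg, Finset.mul_sum]
    have step1 : ∀ k ∈ Finset.univ.filter (fun k => R.deg k = R.deg a * g),
        R.d a * R.d k ^ 2 = ∑ i : I, (R.N a i k : ℝ) * R.d i * R.d k := by
      intro k _
      rw [← Finset.sum_mul, lemA]
      ring
    rw [Finset.sum_congr rfl step1, Finset.sum_comm]
    -- now restrict outer sum over i to the filter
    refine (Finset.sum_subset (Finset.subset_univ _) ?_).symm
    intro i _ hi
    simp only [Finset.mem_filter, Finset.mem_univ, true_and] at hi
    refine Finset.sum_eq_zero fun k hk => ?_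
    simp only [Finset.mem_filter, Finset.mem_univ, true_and] at hk
    have : R.N a i k = 0 := by
      by_contra h
      have hdeg := R.deg_mul a i k h
      rw [hk] at hdeg
      exact hi (mul_left_cancel hdeg).symm
    rw [this]; push_cast; ring
  rw [key, Sg, Finset.mul_sum]
  refine Finset.sum_congr rfl fun i hi => ?_
  simp only [Finset.mem_filter, Finset.mem_univ, true_and] at hi
  have : ∑ k ∈ Finset.univ.filter (fun k => R.deg k = R.deg a * g),
      (R.N a i k : ℝ) * R.d i * R.d k
      = ∑ k ∈ Finset.univ.filter (fun k => R.deg k = R.deg a * R.deg i),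
          ((R.N a i k : ℝ) * R.d k) * R.d i := by
    rw [hi]
    exact Finset.sum_congr rfl fun k _ => by ring
  rw [this, ← Finset.sum_mul, sum_restrict R a i (fun k => R.d k), ← R.d_mul]
  ring

lemma S_all (g : G) : Sg R g = Sg R 1 := by
  obtain ⟨a, ha⟩ := R.faithful g
  have := S_const R a 1
  rwa [mul_one, ha] at this

end IsingAux

namespace IsingAux

lemma no_nat_sq_two (n : ℕ) : n * n ≠ 2 := by
  rcases le_or_gt n 1 with h | h
  · nlinarith
  · nlinarith

end IsingAux

/-- if `I` is an Ising category, with `Irr I = {1, δ, X}` and fusion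
rules `δ² = 1`, `δX = Xδ = X`, `X² = 1 ⊕ δ`, then every faithful `G`-extension
`C = ⊕_g C_g` of `I` is slightly trivial: every component contains an invertible
simple object. -/
theorem stmt12 {G I : Type} [Group G] [Fintype G] [DecidableEq G]
    [Fintype I] [DecidableEq I] (R : GradedFusionRing G I)
    (δ X : I) (hδdeg : R.deg δ = 1) (hXdeg : R.deg X = 1)
    (hne1 : δ ≠ R.one) (hne2 : X ≠ R.one) (hne3 : δ ≠ X)
    (hrank : ∀ i : I, R.deg i = 1 → i = R.one ∨ i = δ ∨ i = X)
    (hδδ : ∀ k : I, R.N δ δ k = if k = R.one then 1 else 0)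
    (hδX : ∀ k : I, R.N δ X k = if k = X then 1 else 0)
    (hXδ : ∀ k : I, R.N X δ k = if k = X then 1 else 0)
    (hXX : ∀ k : I, R.N X X k = (if k = R.one then 1 else 0) + (if k = δ then 1 else 0)) :
    ∀ g : G, ∃ δ' : I, R.deg δ' = g ∧ R.d δ' = 1 := by
  intro g
  by_contra hcon
  push_neg at hcon
  -- basic dimensions
  have hdδ : R.d δ = 1 := by
    have h := R.d_mul δ δ
    simp only [hδδ] at h
    push_cast at h
    simp only [ite_mul, one_mul, zero_mul, Finset.sum_ite_eq', Finset.mem_univ,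
      if_true, R.d_one] at h
    have h1 := R.one_le_d δ
    nlinarith
  have hdX2 : R.d X * R.d X = 2 := by
    have h := R.d_mul X X
    simp only [hXX] at h
    push_cast at h
    simp only [add_mul, ite_mul, one_mul, zero_mul, Finset.sum_add_distrib,
      Finset.sum_ite_eq', Finset.mem_univ, if_true, R.d_one, hdδ] at h
    linarith
  have hdX1 : 1 ≤ R.d X := R.one_le_d X
  -- the degree-1 component
  have filter1 : Finset.univ.filter (fun i => R.deg i = (1 : G)) = {R.one, δ, X} := by
    ext k
    simp only [Finset.mem_filter, Finset.mem_univ, true_and, Finset.mem_insert,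
      Finset.mem_singleton]
    constructor
    · exact hrank k
    · rintro (rfl | rfl | rfl)
      · exact R.deg_one
      · exact hδdeg
      · exact hXdeg
  have hone_not : R.one ∉ ({δ, X} : Finset I) := by
    simp only [Finset.mem_insert, Finset.mem_singleton]
    push_neg
    exact ⟨Ne.symm hne1, Ne.symm hne2⟩
  have hδ_not : δ ∉ ({X} : Finset I) := by
    simpa using hne3
  -- S_1 = 4
  have hS1 : IsingAux.Sg R (1 : G) = 4 := by
    rw [IsingAux.Sg, filter1, Finset.sum_insert hone_not, Finset.sum_insert hδ_not,
      Finset.sum_singleton, R.d_one, hdδ]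
    nlinarith
  -- component of degree g
  set T := Finset.univ.filter (fun i => R.deg i = g) with hTdef
  have hT4 : ∑ i ∈ T, R.d i ^ 2 = 4 := by
    have := IsingAux.S_all R g
    rw [hS1] at this
    exact this
  have hTne : T.Nonempty := by
    obtain ⟨a, ha⟩ := R.faithful g
    exact ⟨a, by simp [hTdef, ha]⟩
  -- every simple in C_g has squared dimension ≥ 2
  have comp : ∀ i : I, R.deg i = g → ∃ a b : ℕ,
      R.d i ^ 2 = 1 + (a : ℝ) + (b : ℝ) * R.d X := by
    intro i hi
    have hsum := R.d_mul i (R.dual i)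
    have hrestr := IsingAux.sum_restrict R i (R.dual i) R.d
    have hdeg1 : R.deg i * R.deg (R.dual i) = 1 := by
      rw [IsingAux.degDual, hi, mul_inv_cancel]
    rw [hdeg1, filter1] at hrestr
    rw [← hrestr, Finset.sum_insert hone_not, Finset.sum_insert hδ_not,
      Finset.sum_singleton, R.d_one, hdδ] at hsum
    have hunit : R.N i (R.dual i) R.one = 1 := by
      rw [R.N_unit]; simp
    rw [hunit] at hsum
    refine ⟨R.N i (R.dual i) δ, R.N i (R.dual i) X, ?_⟩
    rw [sq]
    rw [R.d_dual] at hsum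
    push_cast at hsum ⊢
    linarith
  have ge2 : ∀ i : I, R.deg i = g → 2 ≤ R.d i ^ 2 := by
    intro i hi
    obtain ⟨a, b, hab⟩ := comp i hi
    have hne := hcon i hi
    have hgt : 1 < R.d i := lt_of_le_of_ne (R.one_le_d i) (Ne.symm hne)
    have h1 : 1 < R.d i ^ 2 := by nlinarith
    rcases Nat.eq_zero_or_pos a with ha | ha
    · rcases Nat.eq_zero_or_pos b with hb | hb
      · subst ha; subst hb; push_cast at hab; linarith
      · have hb1 : (1 : ℝ) ≤ (b : ℝ) := by exact_mod_cast hb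
        nlinarith
    · have ha1 : (1 : ℝ) ≤ (a : ℝ) := by exact_mod_cast ha
      have hb0 : (0 : ℝ) ≤ (b : ℝ) := Nat.cast_nonneg b
      nlinarith
  -- T has at most 2 elements
  have hcard2 : T.card ≤ 2 := by
    by_contra hc
    push_neg at hc
    have hle : (T.card : ℝ) * 2 ≤ ∑ i ∈ T, R.d i ^ 2 := by
      calc (T.card : ℝ) * 2 = ∑ _i ∈ T, (2 : ℝ) := by
            rw [Finset.sum_const, nsmul_eq_mul]
        _ ≤ ∑ i ∈ T, R.d i ^ 2 := by
            refine Finset.sum_le_sum fun i hi => ?_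
            simp only [hTdef, Finset.mem_filter, Finset.mem_univ, true_and] at hi
            exact ge2 i hi
    have : (3 : ℝ) ≤ (T.card : ℝ) := by exact_mod_cast hc
    linarith [hT4]
  have hcard1 : 1 ≤ T.card := Finset.card_pos.mpr hTne
  interval_cases h : T.card
  · -- card = 1
    obtain ⟨i, hTi⟩ := Finset.card_eq_one.mp h
    have hi_deg : R.deg i = g := by
      have : i ∈ T := by rw [hTi]; exact Finset.mem_singleton_self i
      simpa [hTdef] using this
    have hXi := R.d_mul X i
    have hrestr := IsingAux.sum_restrict R X i R.d
    have hdegXi : R.deg X * R.deg i = g := by rw [hXdeg, hi_deg, one_mul]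
    rw [hdegXi] at hrestr
    rw [← hTdef, hTi, Finset.sum_singleton] at hrestr
    rw [← hrestr] at hXi
    have hdi : R.d X = (R.N X i i : ℝ) :=
      mul_right_cancel₀ (ne_of_gt (IsingAux.d_pos R i)) hXi
    have : (R.N X i i : ℝ) * (R.N X i i : ℝ) = 2 := by rw [← hdi]; exact hdX2
    have h2 : R.N X i i * R.N X i i = 2 := by exact_mod_cast this
    exact IsingAux.no_nat_sq_two _ h2
  · -- card = 2
    obtain ⟨i, j, hij, hTij⟩ := Finset.card_eq_two.mp h
    have hi_deg : R.deg i = g := by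
      have : i ∈ T := by rw [hTij]; exact Finset.mem_insert_self i {j}
      simpa [hTdef] using this
    have hj_deg : R.deg j = g := by
      have : j ∈ T := by rw [hTij]; simp
      simpa [hTdef] using this
    have hj_not : i ∉ ({j} : Finset I) := by simpa using hij
    have hsum2 : R.d i ^ 2 + R.d j ^ 2 = 4 := by
      rw [hTij, Finset.sum_insert hj_not, Finset.sum_singleton] at hT4
      exact hT4
    have hdi2 : R.d i ^ 2 = 2 := le_antisymm (by linarith [ge2 j hj_deg]) (ge2 i hi_deg)
    have hdj2 : R.d j ^ 2 = 2 := le_antisymm (by linarith [ge2 i hi_deg]) (ge2 j hj_deg)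
    have hdji : R.d j = R.d i := by
      have h1 := IsingAux.d_pos R i
      have h2 := IsingAux.d_pos R j
      nlinarith
    have hdXi : R.d X = R.d i := by
      have h1 := IsingAux.d_pos R i
      have h2 : (0 : ℝ) < R.d X := IsingAux.d_pos R X
      nlinarith
    have hXi := R.d_mul X i
    have hrestr := IsingAux.sum_restrict R X i R.d
    have hdegXi : R.deg X * R.deg i = g := by rw [hXdeg, hi_deg, one_mul]
    rw [hdegXi] at hrestr
    rw [← hTdef, hTij, Finset.sum_insert hj_not, Finset.sum_singleton] at hrestr
    rw [← hrestr, hdji] at hXi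
    -- d X * d i = (N X i i + N X i j) * d i
    have hcancel : R.d X = (R.N X i i : ℝ) + (R.N X i j : ℝ) := by
      have := mul_right_cancel₀ (ne_of_gt (IsingAux.d_pos R i))
        (by linarith [hXi] : R.d X * R.d i = ((R.N X i i : ℝ) + (R.N X i j : ℝ)) * R.d i)
      exact this
    have : ((R.N X i i + R.N X i j : ℕ) : ℝ) * ((R.N X i i + R.N X i j : ℕ) : ℝ) = 2 := by
      push_cast
      rw [← hcancel]
      exact hdX2
    have h2 : (R.N X i i + R.N X i j) * (R.N X i i + R.N X i j) = 2 := by exact_mod_cast this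
    exact IsingAux.no_nat_sq_two _ h2
end

section
/- Let C = ⊕_{g∈G} C_g be a faithful G-extension of a fusion category D. Then FPdim(C_g) = FPdim(C_h) for all g, h ∈ G, and FPdim(C) = |G| · FPdim(D). -/
open scoped BigOperators
open Real

section Aux

variable {I : Type} [Fintype I] [DecidableEq I]

/-- Cyclic symmetry of the fusion coefficients. -/
lemma FusionRing.cyclic_s14 (R : FusionRing I) (i j k : I) :
    R.N i j (R.dual k) = R.N j k (R.dual i) := by
  have h := R.assoc i j k R.one
  have e1 : ∀ m, (k = R.dual m) ↔ (m = R.dual k) := by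
    intro m
    constructor <;> (rintro rfl; rw [R.dual_dual])
  have e2 : ∀ m, (m = R.dual i) = (m = R.dual i) := fun _ => rfl
  simp only [R.N_unit, e1, mul_ite, mul_one, mul_zero] at h
  rwa [Finset.sum_ite_eq' Finset.univ (R.dual k) (fun m => R.N i j m),
    Finset.sum_ite_eq' Finset.univ (R.dual i) (fun m => R.N j k m),
    if_pos (Finset.mem_univ _), if_pos (Finset.mem_univ _)] at h

/-- Summing the fusion coefficients against the dimension in the first slot. -/
lemma FusionRing.sum_N_d_left (R : FusionRing I) (j k : I) :
    ∑ i : I, (R.N i j k : ℝ) * R.d i = R.d j * R.d k := by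
  have key : ∀ i, R.N i j k = R.N j (R.dual k) (R.dual i) := by
    intro i
    have h := R.cyclic_s14 i j (R.dual k)
    rwa [R.dual_dual] at h
  have bij : Function.Bijective R.dual :=
    Function.Involutive.bijective R.dual_dual
  calc ∑ i : I, (R.N i j k : ℝ) * R.d i
      = ∑ i : I, (R.N j (R.dual k) (R.dual i) : ℝ) * R.d i := by
        simp only [key]
    _ = ∑ i : I, (R.N j (R.dual k) i : ℝ) * R.d i := by
        refine Fintype.sum_bijective R.dual bij _ _ ?_
        intro x
        rw [R.d_dual]
    _ = R.d j * R.d (R.dual k) := (R.d_mul j (R.dual k)).symm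
    _ = R.d j * R.d k := by rw [R.d_dual]

end Aux

section GradedAux

variable {G I : Type} [Group G] [Fintype G] [DecidableEq G]
  [Fintype I] [DecidableEq I]

/-- FP dimension of the `g`-component, as a filtered sum. -/
noncomputable def GradedFusionRing.T (R : GradedFusionRing G I) (g : G) : ℝ :=
  ∑ i ∈ Finset.univ.filter (fun i => R.deg i = g), R.d i ^ 2

lemma GradedFusionRing.T_eq_subtype (R : GradedFusionRing G I) (g : G) :
    R.T g = ∑ i : {i : I // R.deg i = g}, R.d i.1 ^ 2 := by
  exact Finset.sum_subtype _ (by simp) (fun i => R.d i ^ 2)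

lemma GradedFusionRing.T_shift (R : GradedFusionRing G I) (g : G) (j : I) :
    R.T g = R.T (g * R.deg j) := by
  have hj : (0:ℝ) < R.d j := lt_of_lt_of_le zero_lt_one (R.one_le_d j)
  have hcancel : R.d j * R.T g = R.d j * R.T (g * R.deg j) := by
    have lhs : R.d j * R.T g
        = ∑ i ∈ Finset.univ.filter (fun i => R.deg i = g),
            ∑ k : I, (R.N i j k : ℝ) * R.d i * R.d k := by
      unfold GradedFusionRing.T
      rw [Finset.mul_sum]
      refine Finset.sum_congr rfl ?_
      intro i _
      have h := R.d_mul i j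
      calc R.d j * R.d i ^ 2 = R.d i * (R.d i * R.d j) := by ring
        _ = R.d i * ∑ k : I, (R.N i j k : ℝ) * R.d k := by rw [h]
        _ = ∑ k : I, (R.N i j k : ℝ) * R.d i * R.d k := by
            rw [Finset.mul_sum]; refine Finset.sum_congr rfl fun k _ => by ring
    -- restrict the inner sum over k to the fiber over g * deg j
    have step1 : ∀ i ∈ Finset.univ.filter (fun i => R.deg i = g),
        ∑ k : I, (R.N i j k : ℝ) * R.d i * R.d k
          = ∑ k ∈ Finset.univ.filter (fun k => R.deg k = g * R.deg j),
              (R.N i j k : ℝ) * R.d i * R.d k := by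
      intro i hi
      rw [Finset.mem_filter] at hi
      refine (Finset.sum_subset (Finset.filter_subset _ _) ?_).symm
      intro k _ hk
      rw [Finset.mem_filter] at hk
      push_neg at hk
      have hN : R.N i j k = 0 := by
        by_contra hne
        exact hk (Finset.mem_univ _) (by rw [R.deg_mul i j k hne, hi.2])
      rw [hN]
      simp
    have rhs : R.d j * R.T (g * R.deg j)
        = ∑ k ∈ Finset.univ.filter (fun k => R.deg k = g * R.deg j),
            ∑ i : I, (R.N i j k : ℝ) * R.d i * R.d k := by
      unfold GradedFusionRing.T
      rw [Finset.mul_sum]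
      refine Finset.sum_congr rfl ?_
      intro k _
      calc R.d j * R.d k ^ 2 = (R.d j * R.d k) * R.d k := by ring
        _ = (∑ i : I, (R.N i j k : ℝ) * R.d i) * R.d k := by
            rw [R.sum_N_d_left j k]
        _ = ∑ i : I, (R.N i j k : ℝ) * R.d i * R.d k := by
            rw [Finset.sum_mul]
    -- restrict the i-sum in rhs to the fiber over g
    have step2 : ∀ k ∈ Finset.univ.filter (fun k => R.deg k = g * R.deg j),
        ∑ i : I, (R.N i j k : ℝ) * R.d i * R.d k
          = ∑ i ∈ Finset.univ.filter (fun i => R.deg i = g),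
              (R.N i j k : ℝ) * R.d i * R.d k := by
      intro k hk
      rw [Finset.mem_filter] at hk
      refine (Finset.sum_subset (Finset.filter_subset _ _) ?_).symm
      intro i _ hi
      rw [Finset.mem_filter] at hi
      push_neg at hi
      have hN : R.N i j k = 0 := by
        by_contra hne
        refine hi (Finset.mem_univ _) ?_
        have := R.deg_mul i j k hne
        rw [hk.2] at this
        exact mul_right_cancel this.symm
      rw [hN]
      simp
    rw [lhs, Finset.sum_congr rfl step1, rhs, Finset.sum_congr rfl step2,
      Finset.sum_comm]
  exact mul_left_cancel₀ (ne_of_gt hj) hcancel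

lemma GradedFusionRing.T_const (R : GradedFusionRing G I) (g h : G) :
    R.T g = R.T h := by
  obtain ⟨j, hj⟩ := R.faithful (g⁻¹ * h)
  have := R.T_shift g j
  rwa [hj, mul_inv_cancel_left] at this

end GradedAux

/-- Etingof–Nikshych–Ostrik: for a faithful `G`-extension
`C = ⊕_g C_g` of `D`, all components have the same Frobenius–Perron dimension,
and `FPdim C = |G| · FPdim D`. -/
theorem stmt14 {G I : Type} [Group G] [Fintype G] [DecidableEq G]
    [Fintype I] [DecidableEq I] (R : GradedFusionRing G I) :
    (∀ g h : G, ∑ i : {i : I // R.deg i = g}, R.d i.1 ^ 2 =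
                ∑ i : {i : I // R.deg i = h}, R.d i.1 ^ 2) ∧
    ∑ i : I, R.d i ^ 2 =
      (Fintype.card G : ℝ) * ∑ i : {i : I // R.deg i = 1}, R.d i.1 ^ 2 := by
  constructor
  · intro g h
    rw [← R.T_eq_subtype, ← R.T_eq_subtype]
    exact R.T_const g h
  · have fib : ∑ i : I, R.d i ^ 2
        = ∑ g : G, ∑ i : {i : I // R.deg i = g}, R.d i.1 ^ 2 :=
      (Fintype.sum_fiberwise R.deg (fun i => R.d i ^ 2)).symm
    rw [fib]
    have : ∀ g : G, ∑ i : {i : I // R.deg i = g}, R.d i.1 ^ 2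
        = ∑ i : {i : I // R.deg i = 1}, R.d i.1 ^ 2 := by
      intro g
      rw [← R.T_eq_subtype, ← R.T_eq_subtype]
      exact R.T_const g 1
    rw [Finset.sum_congr rfl (fun g _ => this g), Finset.sum_const,
      Finset.card_univ, nsmul_eq_mul]
end
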